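/- arXiv:2304.12676 — 5 statements merged into one kernel-verified Lean document; each statement's English description precedes it below -/
import Mathlib

section
/- Integration by parts for the graph p-Laplacian: let p > 1, let u : V → ℝ be any function and let φ : V → ℝ have finite support. Then ∑_{x∈V} μ(x)·Δ_p u(x)·φ(x) = −∑_{x∈V} μ(x)·|∇u|^{p−2}(x)·Γ(u,φ)(x), where both sums have only finitely many nonzero terms because the graph is locally finite. -/
open scoped BigOperators
open Filter Topology

/-- A locally finite weighted graph: `ω x y ≠ 0` encodes the edge relation `x ∼ y`,
edge weights are symmetric and nonnegative, `μ` is a positive vertex measure, and every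
vertex has finitely many neighbors. -/
structure WGraph (V : Type*) where
  ω : V → V → ℝ
  μ : V → ℝ
  symm : ∀ x y, ω x y = ω y x
  loopless : ∀ x, ω x x = 0
  weight_nonneg : ∀ x y, 0 ≤ ω x y
  mu_pos : ∀ x, 0 < μ x
  locFin : ∀ x, {y | ω x y ≠ 0}.Finite

namespace WGraph

variable {V : Type*}

/-- The gradient form `Γ(u,v)(x)`. -/
noncomputable def gamma (G : WGraph V) (u v : V → ℝ) (x : V) : ℝ :=
  (1 / (2 * G.μ x)) * ∑' y, G.ω x y * (u y - u x) * (v y - v x)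

/-- The length of the gradient `|∇u|(x)`. -/
noncomputable def grad (G : WGraph V) (u : V → ℝ) (x : V) : ℝ :=
  Real.sqrt (G.gamma u u x)

/-- The graph `p`-Laplacian `Δ_p u (x)`. -/
noncomputable def lapP (G : WGraph V) (p : ℝ) (u : V → ℝ) (x : V) : ℝ :=
  (1 / (2 * G.μ x)) *
    ∑' y, (G.grad u y ^ (p - 2) + G.grad u x ^ (p - 2)) * (G.ω x y * (u y - u x))

/-- The degree `deg(x) = ∑_{y ∼ x} ω_{xy}`. -/
noncomputable def deg (G : WGraph V) (x : V) : ℝ := ∑' y, G.ω x y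

/-- The underlying simple graph: `x ∼ y` iff `ω x y ≠ 0`. -/
def toSimpleGraph (G : WGraph V) : SimpleGraph V where
  Adj x y := G.ω x y ≠ 0
  symm := by
    constructor
    intro x y hxy
    rw [G.symm]
    exact hxy
  loopless := by
    constructor
    intro x hx
    exact hx (G.loopless x)

/-- The graph distance `dist(x,y)`: the minimal number of edges joining `x` and `y`. -/
noncomputable def dist (G : WGraph V) (x y : V) : ℕ := (G.toSimpleGraph).dist x y

/-- `∑_{x∈V} μ(x)(|∇u|^s(x) + h(x)|u(x)|^s)`, the `s`-th power of the `W_h^{1,s}(V)` norm. -/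
noncomputable def sobSum (G : WGraph V) (h : V → ℝ) (s : ℝ) (u : V → ℝ) : ℝ :=
  ∑' x, G.μ x * (G.grad u x ^ s + h x * |u x| ^ s)

/-- Finiteness of the Sobolev sum, i.e. membership in `W_h^{1,s}(V)`. -/
def SobSummable (G : WGraph V) (h : V → ℝ) (s : ℝ) (u : V → ℝ) : Prop :=
  Summable fun x => G.μ x * (G.grad u x ^ s + h x * |u x| ^ s)

/-- The `W_h^{1,s}(V)` norm. -/
noncomputable def sobNorm (G : WGraph V) (h : V → ℝ) (s : ℝ) (u : V → ℝ) : ℝ :=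
  (G.sobSum h s u) ^ (1 / s)

/-- Membership in `L^r(V)`. -/
def MemLpV (G : WGraph V) (r : ℝ) (g : V → ℝ) : Prop :=
  Summable fun x => G.μ x * |g x| ^ r

/-- The `L^r(V)` norm. -/
noncomputable def lpNorm (G : WGraph V) (r : ℝ) (g : V → ℝ) : ℝ :=
  (∑' x, G.μ x * |g x| ^ r) ^ (1 / r)

/-- The energy functional `φ_λ(u,v)` associated with the `(p,q)`-Laplacian system. -/
noncomputable def energy (G : WGraph V) (p q lam : ℝ) (h1 h2 e1 e2 : V → ℝ)
    (F : V → ℝ → ℝ → ℝ) (u v : V → ℝ) : ℝ :=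
  (1 / p) * G.sobSum h1 p u + (1 / q) * G.sobSum h2 q v
    - ∑' x, G.μ x * F x (u x) (v x)
    - lam * ∑' x, G.μ x * (e1 x * u x + e2 x * v x)

/-- The energy functional `φ_ε(u)` associated with the scalar `p`-Laplacian equation. -/
noncomputable def energyScalar (G : WGraph V) (p eps : ℝ) (h e : V → ℝ)
    (F : V → ℝ → ℝ) (u : V → ℝ) : ℝ :=
  (1 / p) * G.sobSum h p u - ∑' x, G.μ x * F x (u x) - eps * ∑' x, G.μ x * (e x * u x)

end WGraph

/-- `F(x,s,t)` is continuously differentiable in `(s,t)`, with partial derivatives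
`Fs` and `Ft`. -/
def IsC1Pair {V : Type*} (F Fs Ft : V → ℝ → ℝ → ℝ) : Prop :=
  ∀ x : V,
    (∀ s t : ℝ, HasDerivAt (fun z => F x z t) (Fs x s t) s) ∧
    (∀ s t : ℝ, HasDerivAt (fun z => F x s z) (Ft x s t) t) ∧
    Continuous (fun st : ℝ × ℝ => Fs x st.1 st.2) ∧
    Continuous (fun st : ℝ × ℝ => Ft x st.1 st.2)

/-- `F(x,s)` is continuously differentiable in `s`, with derivative `Fs`. -/
def IsC1Scalar {V : Type*} (F Fs : V → ℝ → ℝ) : Prop :=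
  ∀ x : V, (∀ s : ℝ, HasDerivAt (F x) (Fs x s) s) ∧ Continuous (Fs x)

/-- integration by parts for the graph `p`-Laplacian:
for `p > 1` and `φ` of finite support,
`∑_{x∈V} μ(x)·Δ_p u(x)·φ(x) = −∑_{x∈V} μ(x)·|∇u|^{p−2}(x)·Γ(u,φ)(x)`. -/
theorem integration_by_parts {V : Type*} (G : WGraph V) (p : ℝ) (hp : 1 < p)
    (u φ : V → ℝ) (hφ : (Function.support φ).Finite) :
    ∑' x, G.μ x * (G.lapP p u x * φ x)
      = - ∑' x, G.μ x * (G.grad u x ^ (p - 2) * G.gamma u φ x) := by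

  classical
  have hμ : ∀ x : V, G.μ x ≠ 0 := fun x => (G.mu_pos x).ne'
  set A : Finset V := hφ.toFinset ∪ hφ.toFinset.biUnion (fun s => (G.locFin s).toFinset)
    with hAdef
  have hφA : ∀ x : V, x ∉ A → φ x = 0 := by
    intro x hx
    by_contra h
    exact hx (Finset.mem_union_left _ (hφ.mem_toFinset.mpr h))
  have hnbr : ∀ x y : V, φ x ≠ 0 → G.ω x y ≠ 0 → y ∈ A := by
    intro x y hx hw
    exact Finset.mem_union_right _ (Finset.mem_biUnion.mpr
      ⟨x, hφ.mem_toFinset.mpr hx, (G.locFin x).mem_toFinset.mpr hw⟩)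
  -- gamma vanishes outside A
  have hgam0 : ∀ x ∉ A, G.gamma u φ x = 0 := by
    intro x hx
    have hz : (fun y => G.ω x y * (u y - u x) * (φ y - φ x)) = fun _ => 0 := by
      funext y
      by_cases hw : G.ω x y = 0
      · rw [hw]; ring
      · have hyx : G.ω y x ≠ 0 := by rw [G.symm y x]; exact hw
        have hφy : φ y = 0 := by
          by_contra h
          exact hx (hnbr y x h hyx)
        rw [hφy, hφA x hx]; ring
    rw [WGraph.gamma, hz, tsum_zero, mul_zero]
  -- convert outer tsums to finite sums over A
  have hL1 : ∑' x, G.μ x * (G.lapP p u x * φ x)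
      = ∑ x ∈ A, G.μ x * (G.lapP p u x * φ x) := by
    apply tsum_eq_sum
    intro x hx
    rw [hφA x hx]; ring
  have hR1 : ∑' x, G.μ x * (G.grad u x ^ (p - 2) * G.gamma u φ x)
      = ∑ x ∈ A, G.μ x * (G.grad u x ^ (p - 2) * G.gamma u φ x) := by
    apply tsum_eq_sum
    intro x hx
    rw [hgam0 x hx]; ring
  -- inner tsums to finite sums over A
  have hgamA : ∀ x ∈ A, G.gamma u φ x
      = (1 / (2 * G.μ x)) * ∑ y ∈ A, G.ω x y * (u y - u x) * (φ y - φ x) := by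
    intro x hxA
    rw [WGraph.gamma]
    congr 1
    apply tsum_eq_sum
    intro y hy
    by_cases hw : G.ω x y = 0
    · rw [hw]; ring
    · have hφx : φ x = 0 := by
        by_contra h
        exact hy (hnbr x y h hw)
      rw [hφA y hy, hφx]; ring
  have hlapA : ∀ x : V, φ x ≠ 0 → G.lapP p u x
      = (1 / (2 * G.μ x)) * ∑ y ∈ A,
          (G.grad u y ^ (p - 2) + G.grad u x ^ (p - 2)) * (G.ω x y * (u y - u x)) := by
    intro x hx
    rw [WGraph.lapP]
    congr 1
    apply tsum_eq_sum
    intro y hy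
    have hw : G.ω x y = 0 := by
      by_contra h
      exact hy (hnbr x y hx h)
    rw [hw]; ring
  -- the three basic double sums
  set P : ℝ := ∑ x ∈ A, ∑ y ∈ A,
      G.grad u y ^ (p - 2) * (G.ω x y * (u y - u x)) * φ x with hPdef
  set Q : ℝ := ∑ x ∈ A, ∑ y ∈ A,
      G.grad u x ^ (p - 2) * (G.ω x y * (u y - u x)) * φ x with hQdef
  set R : ℝ := ∑ x ∈ A, ∑ y ∈ A,
      G.grad u x ^ (p - 2) * (G.ω x y * (u y - u x)) * φ y with hRdef
  have hPR : P = -R := by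
    rw [hPdef, hRdef, Finset.sum_comm, ← Finset.sum_neg_distrib]
    apply Finset.sum_congr rfl
    intro x _
    rw [← Finset.sum_neg_distrib]
    apply Finset.sum_congr rfl
    intro y _
    rw [G.symm y x]; ring
  -- LHS equals (P + Q)/2
  have hL2 : ∑ x ∈ A, G.μ x * (G.lapP p u x * φ x) = (1/2) * (P + Q) := by
    rw [hPdef, hQdef, ← Finset.sum_add_distrib, Finset.mul_sum]
    apply Finset.sum_congr rfl
    intro x _
    by_cases hx : φ x = 0
    · simp [hx]
    · rw [hlapA x hx]
      simp only [Finset.mul_sum, Finset.sum_mul]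
      rw [← Finset.sum_add_distrib, Finset.mul_sum]
      apply Finset.sum_congr rfl
      intro y _
      field_simp [hμ x]
  -- RHS sum equals (R - Q)/2
  have hR2 : ∑ x ∈ A, G.μ x * (G.grad u x ^ (p - 2) * G.gamma u φ x)
      = (1/2) * (R - Q) := by
    rw [hRdef, hQdef, ← Finset.sum_sub_distrib, Finset.mul_sum]
    apply Finset.sum_congr rfl
    intro x hxA
    rw [hgamA x hxA]
    simp only [Finset.mul_sum, Finset.sum_mul]
    rw [← Finset.sum_sub_distrib, Finset.mul_sum]
    apply Finset.sum_congr rfl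
    intro y _
    field_simp [hμ x]
  rw [hL1, hR1, hL2, hR2]
  linarith [hPR]
end

section
/- Compactness core of Lemma 2.1: let s > 1, suppose μ(x) ≥ μ0 > 0 and h(x) ≥ h0 > 0 for all x ∈ V, and suppose h(x) → +∞ as dist(x,x0) → ∞ for some fixed x0 ∈ V (i.e., for every C > 0 there is R > 0 such that h(x) ≥ C whenever dist(x,x0) ≥ R). Let u_k, u : V → ℝ satisfy u_k(x) → u(x) for every x ∈ V and ∑_{x∈V} μ(x)h(x)|u_k(x)−u(x)|^s ≤ c0 for all k, for some constant c0 > 0. Then ∑_{x∈V} μ(x)|u_k(x)−u(x)|^s → 0 as k → ∞; consequently sup_{x∈V}|u_k(x)−u(x)| → 0 and (∑_{x∈V} μ(x)|u_k(x)−u(x)|^r)^{1/r} → 0 for every r ∈ [s,∞). -/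
open scoped BigOperators
open Filter Topology

private lemma ball_fin {V : Type*} (G' : SimpleGraph V) (hc : G'.Connected)
    (hlf : ∀ x : V, {y | G'.Adj x y}.Finite) (x0 : V) :
    ∀ n : ℕ, {x : V | G'.dist x x0 ≤ n}.Finite := by
  intro n
  induction n with
  | zero =>
    apply Set.Finite.subset (Set.finite_singleton x0)
    intro x hx
    simp only [Set.mem_setOf_eq, Nat.le_zero] at hx
    have := ((hc x x0).dist_eq_zero_iff).mp hx
    simp [this]
  | succ n ih =>
    apply Set.Finite.subset (ih.union (Set.Finite.biUnion ih (fun y _ => hlf y)))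
    intro x hx
    simp only [Set.mem_setOf_eq] at hx
    rcases Nat.lt_or_ge (G'.dist x x0) (n + 1) with hlt | hge
    · exact Or.inl (Nat.lt_succ_iff.mp hlt)
    · have hd : G'.dist x x0 = n + 1 := le_antisymm hx hge
      obtain ⟨p, hp⟩ := (hc x x0).exists_walk_length_eq_dist
      rw [hd] at hp
      cases p with
      | nil => simp at hp
      | @cons _ y _ hadj q =>
        right
        have hq : q.length = n := by
          simpa [SimpleGraph.Walk.length_cons] using hp
        have hy : y ∈ {x : V | G'.dist x x0 ≤ n} := by
          simp only [Set.mem_setOf_eq]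
          calc G'.dist y x0 ≤ q.length := SimpleGraph.dist_le q
            _ = n := hq
        exact Set.mem_biUnion hy hadj.symm

/-- compactness core of Lemma 2.1. If `h ≥ h0 > 0` is coercive
(`h(x) → ∞` as `dist(x,x0) → ∞`), `u_k → u` pointwise and
`∑_{x∈V} μ(x)h(x)|u_k(x)−u(x)|^s ≤ c0` for all `k`, then
`∑_{x∈V} μ(x)|u_k(x)−u(x)|^s → 0`, hence `sup_{x∈V}|u_k(x)−u(x)| → 0` and
`(∑_{x∈V} μ(x)|u_k(x)−u(x)|^r)^{1/r} → 0` for every `r ∈ [s,∞)`. -/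
theorem compact_embedding_core {V : Type*} (G : WGraph V)
    (hconn : G.toSimpleGraph.Connected) (s : ℝ) (hs : 1 < s)
    (h : V → ℝ) (μ0 h0 : ℝ) (hμ0 : 0 < μ0) (hh0 : 0 < h0)
    (hμ : ∀ x, μ0 ≤ G.μ x) (hh : ∀ x, h0 ≤ h x)
    (x0 : V)
    (hcoer : ∀ C : ℝ, 0 < C → ∃ R : ℕ, 0 < R ∧ ∀ x, R ≤ G.dist x x0 → C ≤ h x)
    (u : ℕ → V → ℝ) (w : V → ℝ)
    (hpt : ∀ x, Tendsto (fun k => u k x) atTop (𝓝 (w x)))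
    (c0 : ℝ) (hc0 : 0 < c0)
    (hsum : ∀ k, Summable fun x => G.μ x * h x * |u k x - w x| ^ s)
    (hbd : ∀ k, ∑' x, G.μ x * h x * |u k x - w x| ^ s ≤ c0) :
    Tendsto (fun k => ∑' x, G.μ x * |u k x - w x| ^ s) atTop (𝓝 0) ∧
    (∀ ε : ℝ, 0 < ε → ∃ N : ℕ, ∀ k, N ≤ k → ∀ x, |u k x - w x| < ε) ∧
    (∀ r : ℝ, s ≤ r →
      Tendsto (fun k => (∑' x, G.μ x * |u k x - w x| ^ r) ^ (1 / r)) atTop (𝓝 0)) := by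
  have hs0 : (0 : ℝ) < s := lt_trans one_pos hs
  set f : ℕ → V → ℝ := fun k x => G.μ x * |u k x - w x| ^ s with hfdef
  have hf_nonneg : ∀ k x, 0 ≤ f k x := fun k x =>
    mul_nonneg (G.mu_pos x).le (Real.rpow_nonneg (abs_nonneg _) s)
  have hle_gen : ∀ (c : ℝ), 0 < c → ∀ k x, c ≤ h x →
      f k x ≤ (1 / c) * (G.μ x * h x * |u k x - w x| ^ s) := by
    intro c hc k x hcx
    have hA : (0 : ℝ) ≤ G.μ x * |u k x - w x| ^ s := hf_nonneg k x
    have h1 : c * (G.μ x * |u k x - w x| ^ s) ≤ h x * (G.μ x * |u k x - w x| ^ s) :=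
      mul_le_mul_of_nonneg_right hcx hA
    calc f k x = (1 / c) * (c * (G.μ x * |u k x - w x| ^ s)) := by
          field_simp
          rfl
      _ ≤ (1 / c) * (h x * (G.μ x * |u k x - w x| ^ s)) := by
          apply mul_le_mul_of_nonneg_left h1 (by positivity)
      _ = (1 / c) * (G.μ x * h x * |u k x - w x| ^ s) := by ring
  have hsumf : ∀ k, Summable (f k) := by
    intro k
    apply Summable.of_nonneg_of_le (hf_nonneg k) (fun x => hle_gen h0 hh0 k x (hh x))
      ((hsum k).mul_left (1 / h0))
  have part1 : Tendsto (fun k => ∑' x, f k x) atTop (𝓝 0) := by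
    rw [Metric.tendsto_atTop]
    intro ε hε
    set C := 2 * c0 / ε with hC
    have hCpos : 0 < C := by positivity
    obtain ⟨R, hR0, hR⟩ := hcoer C hCpos
    have hball : {x : V | G.toSimpleGraph.dist x x0 ≤ R}.Finite :=
      ball_fin G.toSimpleGraph hconn (fun x => G.locFin x) x0 R
    set K : Finset V := hball.toFinset with hKdef
    have hKmem : ∀ x : V, x ∉ K → C ≤ h x := by
      intro x hx
      apply hR
      by_contra hcon
      push_neg at hcon
      apply hx
      rw [hKdef, Set.Finite.mem_toFinset]
      exact le_of_lt hcon
    have hout : ∀ k, ∑' (x : ((K : Set V)ᶜ : Set V)), f k ↑x ≤ ε / 2 := by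
      intro k
      have hsub : Summable fun x : ((K : Set V)ᶜ : Set V) => f k ↑x := (hsumf k).subtype _
      have hsubh : Summable fun x : ((K : Set V)ᶜ : Set V) =>
          G.μ ↑x * h ↑x * |u k ↑x - w ↑x| ^ s := (hsum k).subtype _
      have h1 : ∑' (x : ((K : Set V)ᶜ : Set V)), f k ↑x ≤
          (1 / C) * ∑' (x : ((K : Set V)ᶜ : Set V)), G.μ ↑x * h ↑x * |u k ↑x - w ↑x| ^ s := by
        rw [← tsum_mul_left]
        refine Summable.tsum_le_tsum (fun x => ?_) hsub (hsubh.mul_left _)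
        exact hle_gen C hCpos k x (hKmem x (fun hmem => x.2 (Finset.mem_coe.mpr hmem)))
      have h2 : ∑' (x : ((K : Set V)ᶜ : Set V)), G.μ ↑x * h ↑x * |u k ↑x - w ↑x| ^ s ≤ c0 := by
        refine le_trans (Summable.tsum_subtype_le _ _ (fun x => ?_) (hsum k)) (hbd k)
        exact mul_nonneg (mul_nonneg (G.mu_pos x).le (le_trans hh0.le (hh x)))
          (Real.rpow_nonneg (abs_nonneg _) s)
      calc ∑' (x : ((K : Set V)ᶜ : Set V)), f k ↑x ≤ (1 / C) * c0 := by
            refine le_trans h1 ?_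
            exact mul_le_mul_of_nonneg_left h2 (by positivity)
        _ = ε / 2 := by rw [hC]; field_simp
    have hfin : Tendsto (fun k => ∑ x ∈ K, f k x) atTop (𝓝 0) := by
      have : Tendsto (fun k => ∑ x ∈ K, f k x) atTop (𝓝 (∑ x ∈ K, (0 : ℝ))) := by
        refine tendsto_finset_sum K (fun x _ => ?_)
        have habs : Tendsto (fun k => |u k x - w x|) atTop (𝓝 0) := by
          have := ((hpt x).sub_const (w x))
          rw [sub_self] at this
          simpa using this.abs
        have hpow : Tendsto (fun k => |u k x - w x| ^ s) atTop (𝓝 0) := by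
          have hc := (Real.continuousAt_rpow_const 0 s (Or.inr hs0.le)).tendsto
          rw [Real.zero_rpow hs0.ne'] at hc
          exact hc.comp habs
        simpa using hpow.const_mul (G.μ x)
      simpa using this
    rw [Metric.tendsto_atTop] at hfin
    obtain ⟨N, hN⟩ := hfin (ε / 2) (by positivity)
    refine ⟨N, fun k hk => ?_⟩
    have hsplit : ∑ x ∈ K, f k x + ∑' (x : ((K : Set V)ᶜ : Set V)), f k ↑x = ∑' x, f k x :=
      Summable.sum_add_tsum_compl (hsumf k)
    have hKb : ∑ x ∈ K, f k x < ε / 2 := by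
      have := hN k hk
      rw [Real.dist_eq, sub_zero] at this
      exact lt_of_abs_lt this
    have htnn : 0 ≤ ∑' x, f k x := tsum_nonneg (hf_nonneg k)
    rw [Real.dist_eq, sub_zero, abs_of_nonneg htnn, ← hsplit]
    have := hout k
    linarith
  have part2 : ∀ ε : ℝ, 0 < ε → ∃ N : ℕ, ∀ k, N ≤ k → ∀ x, |u k x - w x| < ε := by
    intro ε hε
    obtain ⟨N, hN⟩ := (Metric.tendsto_atTop.mp part1) (μ0 * ε ^ s) (by positivity)
    refine ⟨N, fun k hk x => ?_⟩
    by_contra hcon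
    push_neg at hcon
    have h1 : μ0 * ε ^ s ≤ f k x :=
      mul_le_mul (hμ x) (Real.rpow_le_rpow hε.le hcon hs0.le) (by positivity) (G.mu_pos x).le
    have h2 : f k x ≤ ∑' x, f k x := Summable.le_tsum (hsumf k) x (fun y _ => hf_nonneg k y)
    have h3 := hN k hk
    rw [Real.dist_eq, sub_zero, abs_of_nonneg (tsum_nonneg (hf_nonneg k))] at h3
    have hεs : 0 < μ0 * ε ^ s := by positivity
    linarith
  refine ⟨part1, part2, ?_⟩
  intro r hr
  have hr0 : (0 : ℝ) < r := lt_of_lt_of_le hs0 hr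
  obtain ⟨N, hN⟩ := part2 1 one_pos
  have hb : Tendsto (fun k => ∑' x, G.μ x * |u k x - w x| ^ r) atTop (𝓝 0) := by
    apply tendsto_of_tendsto_of_tendsto_of_le_of_le' tendsto_const_nhds part1
    · filter_upwards with k
      exact tsum_nonneg fun x =>
        mul_nonneg (G.mu_pos x).le (Real.rpow_nonneg (abs_nonneg _) r)
    · filter_upwards [eventually_ge_atTop N] with k hk
      have hle : ∀ x, G.μ x * |u k x - w x| ^ r ≤ f k x := by
        intro x
        apply mul_le_mul_of_nonneg_left _ (G.mu_pos x).le
        rcases eq_or_lt_of_le (abs_nonneg (u k x - w x)) with h0' | h0'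
        · rw [← h0', Real.zero_rpow hr0.ne', Real.zero_rpow hs0.ne']
        · exact Real.rpow_le_rpow_of_exponent_ge h0' (hN k hk x).le hr
      exact Summable.tsum_le_tsum hle (Summable.of_nonneg_of_le
        (fun x => mul_nonneg (G.mu_pos x).le (Real.rpow_nonneg (abs_nonneg _) r))
        hle (hsumf k)) (hsumf k)
  have hcont : Tendsto (fun t : ℝ => t ^ (1 / r)) (𝓝 0) (𝓝 0) := by
    have hc := (Real.continuousAt_rpow_const 0 (1 / r) (Or.inr (by positivity))).tendsto
    rwa [Real.zero_rpow (one_div_ne_zero hr0.ne')] at hc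
  exact hcont.comp hb
end

section
/- Compactness core of Lemma 2.2: let s > 1, suppose μ(x) ≥ μ0 > 0 and h(x) ≥ h0 > 0 for all x ∈ V, and suppose that for every constant B > 0 one has ∑_{x ∈ V, h(x) ≤ B} μ(x) < ∞. Let u_k : V → ℝ satisfy ∑_{x∈V} μ(x)(|∇u_k|^s(x) + h(x)|u_k(x)|^s) ≤ C0^s for all k, for some constant C0 > 0, and suppose u_k(x) → u(x) for every x ∈ V, where u satisfies ∑_{x∈V} μ(x)(|∇u|^s(x)+h(x)|u(x)|^s) < ∞. Then ∑_{x∈V} μ(x)|u_k(x)|^s → ∑_{x∈V} μ(x)|u(x)|^s as k → ∞; consequently ∑_{x∈V} μ(x)|u_k(x)−u(x)|^s → 0, sup_{x∈V}|u_k(x)−u(x)| → 0, and (∑_{x∈V} μ(x)|u_k(x)−u(x)|^r)^{1/r} → 0 for every r ∈ [s,∞). -/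
open scoped BigOperators
open Filter Topology

section AuxCompact

variable {V : Type*}

private lemma aux_le_inv_mul {a b c : ℝ} (hc : 0 < c) (h : c * a ≤ b) : a ≤ c⁻¹ * b := by
  have ha : a = c⁻¹ * (c * a) := by field_simp
  rw [ha]
  exact mul_le_mul_of_nonneg_left h (by positivity)

private lemma aux_abs_rpow_add_le {s : ℝ} (hs : 0 ≤ s) (a b : ℝ) :
    |a + b| ^ s ≤ 2 ^ s * (|a| ^ s + |b| ^ s) := by
  have h1 : |a + b| ≤ 2 * max |a| |b| := by
    have := abs_add_le a b
    rcases le_total |a| |b| with hab | hab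
    · rw [max_eq_right hab]; nlinarith [abs_nonneg b]
    · rw [max_eq_left hab]; nlinarith [abs_nonneg a]
  have hmax : 0 ≤ max |a| |b| := le_max_of_le_left (abs_nonneg a)
  calc |a + b| ^ s ≤ (2 * max |a| |b|) ^ s := Real.rpow_le_rpow (abs_nonneg _) h1 hs
    _ = 2 ^ s * (max |a| |b|) ^ s := Real.mul_rpow (by norm_num) hmax
    _ ≤ 2 ^ s * (|a| ^ s + |b| ^ s) := by
        have h2 : (max |a| |b|) ^ s ≤ |a| ^ s + |b| ^ s := by
          rcases le_total |a| |b| with hab | hab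
          · rw [max_eq_right hab]
            nlinarith [Real.rpow_nonneg (abs_nonneg a) s]
          · rw [max_eq_left hab]
            nlinarith [Real.rpow_nonneg (abs_nonneg b) s]
        nlinarith [Real.rpow_nonneg (show (0:ℝ) ≤ 2 by norm_num) s]

private lemma aux_summable_mu_abs (G : WGraph V) {s : ℝ} (h : V → ℝ) {h0 : ℝ}
    (hh0 : 0 < h0) (hh : ∀ x, h0 ≤ h x) (f : V → ℝ)
    (hf : Summable fun x => G.μ x * (h x * |f x| ^ s)) :
    Summable fun x => G.μ x * |f x| ^ s := by
  refine Summable.of_nonneg_of_le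
    (fun x => mul_nonneg (G.mu_pos x).le (Real.rpow_nonneg (abs_nonneg _) s))
    (fun x => ?_) (hf.mul_left h0⁻¹)
  refine aux_le_inv_mul hh0 ?_
  have h1 : 0 ≤ G.μ x * |f x| ^ s :=
    mul_nonneg (G.mu_pos x).le (Real.rpow_nonneg (abs_nonneg _) s)
  nlinarith [mul_le_mul_of_nonneg_left (hh x) h1]

private lemma aux_core_tendsto (G : WGraph V) {s : ℝ} (hs : 0 < s)
    (h : V → ℝ) (μ0 h0 : ℝ) (hμ0 : 0 < μ0) (hh0 : 0 < h0)
    (hμ : ∀ x, μ0 ≤ G.μ x) (hh : ∀ x, h0 ≤ h x)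
    (hH2' : ∀ B : ℝ, 0 < B → Summable fun x : {x : V // h x ≤ B} => G.μ x)
    (v : ℕ → V → ℝ) (z : V → ℝ) (C1 : ℝ)
    (hsumk : ∀ k, Summable fun x => G.μ x * (h x * |v k x| ^ s))
    (hsumz : Summable fun x => G.μ x * (h x * |z x| ^ s))
    (hbdk : ∀ k, ∑' x, G.μ x * (h x * |v k x| ^ s) ≤ C1)
    (hbdz : ∑' x, G.μ x * (h x * |z x| ^ s) ≤ C1)
    (hpt : ∀ x, Tendsto (fun k => v k x) atTop (𝓝 (z x))) :
    Tendsto (fun k => ∑' x, G.μ x * |v k x| ^ s) atTop (𝓝 (∑' x, G.μ x * |z x| ^ s)) := by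
  have hnn : ∀ (f : V → ℝ) (x : V), 0 ≤ G.μ x * (h x * |f x| ^ s) := fun f x =>
    mul_nonneg (G.mu_pos x).le
      (mul_nonneg (hh0.trans_le (hh x)).le (Real.rpow_nonneg (abs_nonneg _) s))
  have hnn' : ∀ (f : V → ℝ) (x : V), 0 ≤ G.μ x * |f x| ^ s := fun f x =>
    mul_nonneg (G.mu_pos x).le (Real.rpow_nonneg (abs_nonneg _) s)
  have hC1 : 0 ≤ C1 := le_trans (tsum_nonneg (hnn z)) hbdz
  set D : ℝ := C1 / (μ0 * h0) with hD
  have hDnn : 0 ≤ D := div_nonneg hC1 (by positivity)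
  -- pointwise bound
  have hptbd : ∀ f : V → ℝ, (Summable fun x => G.μ x * (h x * |f x| ^ s)) →
      (∑' x, G.μ x * (h x * |f x| ^ s) ≤ C1) → ∀ x, |f x| ^ s ≤ D := by
    intro f hf hb x
    have h1 : G.μ x * (h x * |f x| ^ s) ≤ C1 :=
      le_trans (Summable.le_tsum hf x fun j _ => hnn f j) hb
    have hfx : 0 ≤ |f x| ^ s := Real.rpow_nonneg (abs_nonneg _) s
    rw [hD, le_div_iff₀ (by positivity)]
    nlinarith [hμ x, hh x, (hμ0.trans_le (hμ x)), (hh0.trans_le (hh x)),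
      mul_le_mul_of_nonneg_right (hμ x) (mul_nonneg (hh0.trans_le (hh x)).le hfx),
      mul_le_mul_of_nonneg_left (mul_le_mul_of_nonneg_right (hh x) hfx) hμ0.le]
  -- uniform tail smallness
  have key : ∀ ε : ℝ, 0 < ε → ∃ F : Finset V,
      ∀ f : V → ℝ, (Summable fun x => G.μ x * (h x * |f x| ^ s)) →
        (∑' x, G.μ x * (h x * |f x| ^ s) ≤ C1) →
        ∑' x : {x : V // x ∉ F}, G.μ x * |f x| ^ s ≤ ε := by
    intro ε hε
    set B : ℝ := 2 * (C1 + 1) / ε with hB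
    have hBpos : 0 < B := by positivity
    set g : V → ℝ := Set.indicator {y | h y ≤ B} G.μ with hg
    have hgsum : Summable g :=
      summable_subtype_iff_indicator.mp (hH2' B hBpos)
    have hgnn : ∀ x, 0 ≤ g x :=
      Set.indicator_nonneg fun y _ => (hμ0.trans_le (hμ y)).le
    have hδ : 0 < ε / (2 * (D + 1)) := by positivity
    obtain ⟨F, hF⟩ :=
      ((tendsto_order.1 (tendsto_tsum_compl_atTop_zero g)).2 _ hδ).exists
    refine ⟨F, fun f hf hb => ?_⟩
    have hS1 : Summable fun x : {x : V // x ∉ F} => G.μ x * |f x| ^ s :=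
      (aux_summable_mu_abs G h hh0 hh f hf).subtype _
    have hS2a : Summable fun x : {x : V // x ∉ F} => D * g x :=
      ((hgsum.mul_left D).subtype _)
    have hS2b : Summable fun x : {x : V // x ∉ F} => B⁻¹ * (G.μ x * (h x * |f x| ^ s)) :=
      ((hf.mul_left B⁻¹).subtype _)
    have hmono : ∀ x : {x : V // x ∉ F},
        G.μ x * |f x| ^ s ≤ D * g x + B⁻¹ * (G.μ x * (h x * |f x| ^ s)) := by
      rintro ⟨x, hx⟩
      by_cases hxB : h x ≤ B
      · have hgx : g x = G.μ x :=
          Set.indicator_of_mem (show x ∈ {y | h y ≤ B} from hxB) G.μ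
        simp only [hgx]
        have h1 : |f x| ^ s ≤ D := hptbd f hf hb x
        have h2 : 0 ≤ B⁻¹ * (G.μ x * (h x * |f x| ^ s)) :=
          mul_nonneg (by positivity) (hnn f x)
        nlinarith [(G.mu_pos x).le]
      · have hgx : g x = 0 :=
          Set.indicator_of_notMem (show x ∉ {y | h y ≤ B} from hxB) G.μ
        simp only [hgx, mul_zero, zero_add]
        push_neg at hxB
        refine aux_le_inv_mul hBpos ?_
        have h3 : 0 ≤ G.μ x * |f x| ^ s := hnn' f x
        nlinarith [mul_le_mul_of_nonneg_left hxB.le h3]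
    have htail2 : ∑' x : {x : V // x ∉ F}, G.μ x * (h x * |f x| ^ s) ≤ C1 := by
      refine le_trans ?_ hb
      exact Summable.tsum_le_tsum_of_inj (fun x => (x : V)) Subtype.val_injective
        (fun c _ => hnn f c) (fun x => le_rfl) (hf.subtype _) hf
    calc ∑' x : {x : V // x ∉ F}, G.μ x * |f x| ^ s
        ≤ ∑' x : {x : V // x ∉ F}, (D * g x + B⁻¹ * (G.μ x * (h x * |f x| ^ s))) :=
          Summable.tsum_le_tsum hmono hS1 (hS2a.add hS2b)
      _ = D * (∑' x : {x : V // x ∉ F}, g x)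
          + B⁻¹ * ∑' x : {x : V // x ∉ F}, G.μ x * (h x * |f x| ^ s) := by
          rw [Summable.tsum_add hS2a hS2b, tsum_mul_left, tsum_mul_left]
      _ ≤ D * (ε / (2 * (D + 1))) + B⁻¹ * C1 := by
          have t1 : ∑' x : {x : V // x ∉ F}, g x ≤ ε / (2 * (D + 1)) := hF.le
          have t2 : B⁻¹ * ∑' x : {x : V // x ∉ F}, G.μ x * (h x * |f x| ^ s)
              ≤ B⁻¹ * C1 := mul_le_mul_of_nonneg_left htail2 (by positivity)
          have := mul_le_mul_of_nonneg_left t1 hDnn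
          linarith
      _ ≤ ε / 2 + ε / 2 := by
          have hD1 : (0:ℝ) < D + 1 := by linarith
          have e1 : D * (ε / (2 * (D + 1))) ≤ ε / 2 := by
            have h1 : D * (ε / (2 * (D + 1))) ≤ (D + 1) * (ε / (2 * (D + 1))) :=
              mul_le_mul_of_nonneg_right (by linarith) (by positivity)
            have h2 : (D + 1) * (ε / (2 * (D + 1))) = ε / 2 := by
              field_simp
            linarith
          have e2 : B⁻¹ * C1 ≤ ε / 2 := by
            have hBinv : B⁻¹ = ε / (2 * (C1 + 1)) := by
              rw [hB, inv_div]
            have h1 : ε / (2 * (C1 + 1)) * C1 ≤ ε / (2 * (C1 + 1)) * (C1 + 1) :=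
              mul_le_mul_of_nonneg_left (by linarith) (by positivity)
            have h2 : ε / (2 * (C1 + 1)) * (C1 + 1) = ε / 2 := by
              field_simp
            rw [hBinv]
            linarith
          linarith
      _ = ε := by ring
  -- main estimate
  rw [Metric.tendsto_atTop]
  intro ε hε
  obtain ⟨F, hF⟩ := key (ε / 4) (by positivity)
  have hfin : Tendsto (fun k => ∑ x ∈ F, G.μ x * |v k x| ^ s) atTop
      (𝓝 (∑ x ∈ F, G.μ x * |z x| ^ s)) := by
    refine tendsto_finset_sum _ fun x _ => ?_
    exact ((hpt x).abs.rpow_const (Or.inr hs.le)).const_mul _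
  obtain ⟨N, hN⟩ := Metric.tendsto_atTop.1 hfin (ε / 4) (by positivity)
  refine ⟨N, fun k hk => ?_⟩
  have hsumk' : Summable fun x => G.μ x * |v k x| ^ s :=
    aux_summable_mu_abs G h hh0 hh _ (hsumk k)
  have hsumz' : Summable fun x => G.μ x * |z x| ^ s :=
    aux_summable_mu_abs G h hh0 hh _ hsumz
  have e1 := Summable.sum_add_tsum_compl (s := F) hsumk'
  have e2 := Summable.sum_add_tsum_compl (s := F) hsumz'
  have tk : ∑' x : {x : V // x ∉ F}, G.μ x * |v k x| ^ s ≤ ε / 4 :=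
    hF (v k) (hsumk k) (hbdk k)
  have tz : ∑' x : {x : V // x ∉ F}, G.μ x * |z x| ^ s ≤ ε / 4 :=
    hF z hsumz hbdz
  have tk0 : 0 ≤ ∑' x : {x : V // x ∉ F}, G.μ x * |v k x| ^ s :=
    tsum_nonneg fun x => hnn' (v k) x
  have tz0 : 0 ≤ ∑' x : {x : V // x ∉ F}, G.μ x * |z x| ^ s :=
    tsum_nonneg fun x => hnn' z x
  have ek : (∑' x, G.μ x * |v k x| ^ s)
      = ∑ x ∈ F, G.μ x * |v k x| ^ s + ∑' x : {x : V // x ∉ F}, G.μ x * |v k x| ^ s :=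
    e1.symm
  have ez : (∑' x, G.μ x * |z x| ^ s)
      = ∑ x ∈ F, G.μ x * |z x| ^ s + ∑' x : {x : V // x ∉ F}, G.μ x * |z x| ^ s :=
    e2.symm
  have hNd := hN k hk
  rw [Real.dist_eq] at hNd ⊢
  rw [ek, ez]
  have habs : |(∑ x ∈ F, G.μ x * |v k x| ^ s + ∑' x : {x : V // x ∉ F}, G.μ x * |v k x| ^ s)
      - (∑ x ∈ F, G.μ x * |z x| ^ s + ∑' x : {x : V // x ∉ F}, G.μ x * |z x| ^ s)|
      ≤ |(∑ x ∈ F, G.μ x * |v k x| ^ s) - ∑ x ∈ F, G.μ x * |z x| ^ s|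
        + |(∑' x : {x : V // x ∉ F}, G.μ x * |v k x| ^ s)
            - ∑' x : {x : V // x ∉ F}, G.μ x * |z x| ^ s| := by
    have := abs_add_le ((∑ x ∈ F, G.μ x * |v k x| ^ s) - ∑ x ∈ F, G.μ x * |z x| ^ s)
      ((∑' x : {x : V // x ∉ F}, G.μ x * |v k x| ^ s)
        - ∑' x : {x : V // x ∉ F}, G.μ x * |z x| ^ s)
    calc _ = |((∑ x ∈ F, G.μ x * |v k x| ^ s) - ∑ x ∈ F, G.μ x * |z x| ^ s)
        + ((∑' x : {x : V // x ∉ F}, G.μ x * |v k x| ^ s)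
            - ∑' x : {x : V // x ∉ F}, G.μ x * |z x| ^ s)| := by ring_nf
      _ ≤ _ := this
  have htaildiff : |(∑' x : {x : V // x ∉ F}, G.μ x * |v k x| ^ s)
      - ∑' x : {x : V // x ∉ F}, G.μ x * |z x| ^ s| ≤ ε / 4 :=
    abs_le.2 ⟨by linarith, by linarith⟩
  linarith

end AuxCompact

/-- compactness core of Lemma 2.2. Under `μ ≥ μ0 > 0`, `h ≥ h0 > 0` and
condition (H2') (`∑_{h(x)≤B} μ(x) < ∞` for every `B > 0`), if the Sobolev norms of `u_k`
are uniformly bounded by `C0` and `u_k → u` pointwise with `u` of finite Sobolev norm,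
then `∑ μ|u_k|^s → ∑ μ|u|^s`; consequently `∑ μ|u_k−u|^s → 0`, `sup|u_k−u| → 0` and
`(∑ μ|u_k−u|^r)^{1/r} → 0` for every `r ∈ [s,∞)`. -/
theorem compact_embedding_core' {V : Type*} (G : WGraph V)
    (hconn : G.toSimpleGraph.Connected) (s : ℝ) (hs : 1 < s)
    (h : V → ℝ) (μ0 h0 : ℝ) (hμ0 : 0 < μ0) (hh0 : 0 < h0)
    (hμ : ∀ x, μ0 ≤ G.μ x) (hh : ∀ x, h0 ≤ h x)
    (hH2' : ∀ B : ℝ, 0 < B → Summable fun x : {x : V // h x ≤ B} => G.μ x)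
    (u : ℕ → V → ℝ) (C0 : ℝ) (hC0 : 0 < C0)
    (hsum : ∀ k, G.SobSummable h s (u k))
    (hbd : ∀ k, G.sobSum h s (u k) ≤ C0 ^ s)
    (w : V → ℝ) (hpt : ∀ x, Tendsto (fun k => u k x) atTop (𝓝 (w x)))
    (hw : G.SobSummable h s w) :
    Tendsto (fun k => ∑' x, G.μ x * |u k x| ^ s) atTop (𝓝 (∑' x, G.μ x * |w x| ^ s)) ∧
    Tendsto (fun k => ∑' x, G.μ x * |u k x - w x| ^ s) atTop (𝓝 0) ∧
    (∀ ε : ℝ, 0 < ε → ∃ N : ℕ, ∀ k, N ≤ k → ∀ x, |u k x - w x| < ε) ∧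
    (∀ r : ℝ, s ≤ r →
      Tendsto (fun k => (∑' x, G.μ x * |u k x - w x| ^ r) ^ (1 / r)) atTop (𝓝 0)) := by
  have hs0 : 0 < s := lt_trans one_pos hs
  have habs_nn : ∀ (f : V → ℝ) (x : V), (0:ℝ) ≤ |f x| ^ s :=
    fun f x => Real.rpow_nonneg (abs_nonneg _) s
  have hnnΦ : ∀ (f : V → ℝ) (x : V), 0 ≤ G.μ x * (h x * |f x| ^ s) := fun f x =>
    mul_nonneg (G.mu_pos x).le
      (mul_nonneg (hh0.trans_le (hh x)).le (habs_nn f x))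
  -- extract the `h`-part of the Sobolev sum
  have hΦ : ∀ f : V → ℝ, G.SobSummable h s f →
      (Summable fun x => G.μ x * (h x * |f x| ^ s)) ∧
      ∑' x, G.μ x * (h x * |f x| ^ s) ≤ G.sobSum h s f := by
    intro f hf
    have hf' : Summable fun x => G.μ x * (G.grad f x ^ s + h x * |f x| ^ s) := hf
    have hle : ∀ x, G.μ x * (h x * |f x| ^ s)
        ≤ G.μ x * (G.grad f x ^ s + h x * |f x| ^ s) := by
      intro x
      have hg : (0:ℝ) ≤ G.grad f x := Real.sqrt_nonneg _
      nlinarith [mul_nonneg (G.mu_pos x).le (Real.rpow_nonneg hg s)]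
    have hsummΦ : Summable fun x => G.μ x * (h x * |f x| ^ s) :=
      Summable.of_nonneg_of_le (hnnΦ f) hle hf'
    exact ⟨hsummΦ, Summable.tsum_le_tsum hle hsummΦ hf'⟩
  have hΦk : ∀ k, Summable fun x => G.μ x * (h x * |u k x| ^ s) :=
    fun k => (hΦ (u k) (hsum k)).1
  have hΦw : Summable fun x => G.μ x * (h x * |w x| ^ s) := (hΦ w hw).1
  set Sw : ℝ := ∑' x, G.μ x * (h x * |w x| ^ s) with hSw
  have hSwnn : 0 ≤ Sw := tsum_nonneg (hnnΦ w)
  have hC0s : (0:ℝ) ≤ C0 ^ s := Real.rpow_nonneg hC0.le s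
  set C1 : ℝ := C0 ^ s + Sw with hC1def
  have hbdk : ∀ k, ∑' x, G.μ x * (h x * |u k x| ^ s) ≤ C1 := by
    intro k
    refine le_trans (le_trans (hΦ (u k) (hsum k)).2 (hbd k)) ?_
    rw [hC1def]; linarith
  have hbdw : ∑' x, G.μ x * (h x * |w x| ^ s) ≤ C1 := by
    rw [hC1def, ← hSw]; linarith
  have hC1nn : 0 ≤ C1 := by rw [hC1def]; linarith
  -- first conclusion
  have main1 : Tendsto (fun k => ∑' x, G.μ x * |u k x| ^ s) atTop
      (𝓝 (∑' x, G.μ x * |w x| ^ s)) :=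
    aux_core_tendsto G hs0 h μ0 h0 hμ0 hh0 hμ hh hH2' u w C1 hΦk hΦw hbdk hbdw hpt
  -- second conclusion
  set C2 : ℝ := 2 ^ s * (C1 + C1) with hC2def
  have h2s : (0:ℝ) ≤ 2 ^ s := Real.rpow_nonneg (by norm_num) s
  have hC2nn : 0 ≤ C2 := by rw [hC2def]; nlinarith
  have hdle : ∀ k x, G.μ x * (h x * |u k x - w x| ^ s)
      ≤ 2 ^ s * (G.μ x * (h x * |u k x| ^ s) + G.μ x * (h x * |w x| ^ s)) := by
    intro k x
    have hxle : |u k x - w x| ^ s ≤ 2 ^ s * (|u k x| ^ s + |w x| ^ s) := by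
      have := aux_abs_rpow_add_le hs0.le (u k x) (-(w x))
      simpa [sub_eq_add_neg] using this
    have h1 : (0:ℝ) ≤ h x := (hh0.trans_le (hh x)).le
    have h2 : (0:ℝ) ≤ G.μ x := (G.mu_pos x).le
    calc G.μ x * (h x * |u k x - w x| ^ s)
        ≤ G.μ x * (h x * (2 ^ s * (|u k x| ^ s + |w x| ^ s))) :=
          mul_le_mul_of_nonneg_left (mul_le_mul_of_nonneg_left hxle h1) h2
      _ = 2 ^ s * (G.μ x * (h x * |u k x| ^ s) + G.μ x * (h x * |w x| ^ s)) := by ring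
  have hΦd : ∀ k, Summable fun x => G.μ x * (h x * |u k x - w x| ^ s) := by
    intro k
    exact Summable.of_nonneg_of_le (hnnΦ _) (hdle k) (((hΦk k).add hΦw).mul_left _)
  have hbdd : ∀ k, ∑' x, G.μ x * (h x * |u k x - w x| ^ s) ≤ C2 := by
    intro k
    calc ∑' x, G.μ x * (h x * |u k x - w x| ^ s)
        ≤ ∑' x, 2 ^ s * (G.μ x * (h x * |u k x| ^ s) + G.μ x * (h x * |w x| ^ s)) :=
          Summable.tsum_le_tsum (hdle k) (hΦd k) (((hΦk k).add hΦw).mul_left _)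
      _ = 2 ^ s * ((∑' x, G.μ x * (h x * |u k x| ^ s))
            + ∑' x, G.μ x * (h x * |w x| ^ s)) := by
          rw [tsum_mul_left, Summable.tsum_add (hΦk k) hΦw]
      _ ≤ C2 := by
          rw [hC2def]
          have := hbdk k
          nlinarith
  have hz0 : Summable fun x : V => G.μ x * (h x * |(0:ℝ)| ^ s) := by
    simp only [abs_zero, Real.zero_rpow hs0.ne', mul_zero]
    exact summable_zero
  have hz0' : ∑' x : V, G.μ x * (h x * |(0:ℝ)| ^ s) ≤ C2 := by
    simp only [abs_zero, Real.zero_rpow hs0.ne', mul_zero, tsum_zero]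
    exact hC2nn
  have hpt0 : ∀ x, Tendsto (fun k => u k x - w x) atTop (𝓝 0) := by
    intro x
    simpa using (hpt x).sub (tendsto_const_nhds (x := w x))
  have main2 : Tendsto (fun k => ∑' x, G.μ x * |u k x - w x| ^ s) atTop (𝓝 0) := by
    have := aux_core_tendsto G hs0 h μ0 h0 hμ0 hh0 hμ hh hH2'
      (fun k x => u k x - w x) (fun _ => 0) C2 hΦd hz0 hbdd hz0' hpt0
    simpa [abs_zero, Real.zero_rpow hs0.ne'] using this
  have hsum2 : ∀ k, Summable fun x => G.μ x * |u k x - w x| ^ s :=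
    fun k => aux_summable_mu_abs G h hh0 hh _ (hΦd k)
  have hnn2 : ∀ k, (0:ℝ) ≤ ∑' x, G.μ x * |u k x - w x| ^ s := fun k =>
    tsum_nonneg fun x => mul_nonneg (G.mu_pos x).le (Real.rpow_nonneg (abs_nonneg _) s)
  -- third conclusion
  have main3 : ∀ ε : ℝ, 0 < ε → ∃ N : ℕ, ∀ k, N ≤ k → ∀ x, |u k x - w x| < ε := by
    intro ε hε
    have hεs : (0:ℝ) < μ0 * ε ^ s := by positivity
    obtain ⟨N, hN⟩ := Metric.tendsto_atTop.1 main2 (μ0 * ε ^ s) hεs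
    refine ⟨N, fun k hk x => ?_⟩
    have hSk := hN k hk
    rw [Real.dist_eq, sub_zero, abs_of_nonneg (hnn2 k)] at hSk
    have hle' : G.μ x * |u k x - w x| ^ s ≤ ∑' y, G.μ y * |u k y - w y| ^ s :=
      Summable.le_tsum (hsum2 k) x fun j _ =>
        mul_nonneg (G.mu_pos j).le (Real.rpow_nonneg (abs_nonneg _) s)
    have h1 : μ0 * |u k x - w x| ^ s ≤ G.μ x * |u k x - w x| ^ s :=
      mul_le_mul_of_nonneg_right (hμ x) (Real.rpow_nonneg (abs_nonneg _) s)
    have h2 : |u k x - w x| ^ s < ε ^ s := by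
      have := lt_of_le_of_lt (le_trans h1 hle') hSk
      exact lt_of_mul_lt_mul_left this hμ0.le
    by_contra hcon
    push_neg at hcon
    exact absurd h2 (not_lt.2 (Real.rpow_le_rpow hε.le hcon hs0.le))
  -- fourth conclusion
  refine ⟨main1, main2, main3, ?_⟩
  intro r hr
  have hr0 : 0 < r := lt_of_lt_of_le hs0 hr
  set D2 : ℝ := C2 / (μ0 * h0) with hD2
  have hD2nn : 0 ≤ D2 := div_nonneg hC2nn (by positivity)
  set K : ℝ := D2 ^ s⁻¹ with hK
  have hKnn : 0 ≤ K := Real.rpow_nonneg hD2nn _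
  have hdK : ∀ k x, |u k x - w x| ≤ K := by
    intro k x
    have h1 : G.μ x * (h x * |u k x - w x| ^ s) ≤ C2 :=
      le_trans (Summable.le_tsum (hΦd k) x fun j _ => hnnΦ (fun y => u k y - w y) j) (hbdd k)
    have h2 : |u k x - w x| ^ s ≤ D2 := by
      rw [hD2, le_div_iff₀ (by positivity)]
      have hfx : (0:ℝ) ≤ |u k x - w x| ^ s := Real.rpow_nonneg (abs_nonneg _) s
      nlinarith [hμ x, hh x, hμ0.trans_le (hμ x), hh0.trans_le (hh x),
        mul_le_mul_of_nonneg_right (hμ x)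
          (mul_nonneg (hh0.trans_le (hh x)).le hfx),
        mul_le_mul_of_nonneg_left (mul_le_mul_of_nonneg_right (hh x) hfx) hμ0.le]
    have h3 : (|u k x - w x| ^ s) ^ s⁻¹ ≤ D2 ^ s⁻¹ :=
      Real.rpow_le_rpow (Real.rpow_nonneg (abs_nonneg _) s) h2 (by positivity)
    rwa [Real.rpow_rpow_inv (abs_nonneg _) hs0.ne'] at h3
  have hptw : ∀ k x, G.μ x * |u k x - w x| ^ r
      ≤ K ^ (r - s) * (G.μ x * |u k x - w x| ^ s) := by
    intro k x
    have e : |u k x - w x| ^ r = |u k x - w x| ^ s * |u k x - w x| ^ (r - s) := by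
      rw [← Real.rpow_add' (abs_nonneg _) (by rw [add_sub_cancel]; exact hr0.ne')]
      congr 1
      ring
    have hle2 : |u k x - w x| ^ (r - s) ≤ K ^ (r - s) :=
      Real.rpow_le_rpow (abs_nonneg _) (hdK k x) (sub_nonneg.2 hr)
    calc G.μ x * |u k x - w x| ^ r
        = (G.μ x * |u k x - w x| ^ s) * |u k x - w x| ^ (r - s) := by rw [e]; ring
      _ ≤ (G.μ x * |u k x - w x| ^ s) * K ^ (r - s) := by
          refine mul_le_mul_of_nonneg_left hle2 ?_
          exact mul_nonneg (G.mu_pos x).le (Real.rpow_nonneg (abs_nonneg _) s)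
      _ = K ^ (r - s) * (G.μ x * |u k x - w x| ^ s) := by ring
  have hsumr : ∀ k, Summable fun x => G.μ x * |u k x - w x| ^ r := by
    intro k
    refine Summable.of_nonneg_of_le
      (fun x => mul_nonneg (G.mu_pos x).le (Real.rpow_nonneg (abs_nonneg _) r))
      (hptw k) ((hsum2 k).mul_left _)
  have hbdr : ∀ k, ∑' x, G.μ x * |u k x - w x| ^ r
      ≤ K ^ (r - s) * ∑' x, G.μ x * |u k x - w x| ^ s := by
    intro k
    calc ∑' x, G.μ x * |u k x - w x| ^ r
        ≤ ∑' x, K ^ (r - s) * (G.μ x * |u k x - w x| ^ s) :=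
          Summable.tsum_le_tsum (hptw k) (hsumr k) ((hsum2 k).mul_left _)
      _ = K ^ (r - s) * ∑' x, G.μ x * |u k x - w x| ^ s := tsum_mul_left
  have hA : Tendsto (fun k => ∑' x, G.μ x * |u k x - w x| ^ r) atTop (𝓝 0) := by
    refine squeeze_zero (fun k => tsum_nonneg fun x =>
      mul_nonneg (G.mu_pos x).le (Real.rpow_nonneg (abs_nonneg _) r)) hbdr ?_
    simpa using main2.const_mul (K ^ (r - s))
  have := hA.rpow_const (p := 1 / r) (Or.inr (by positivity))
  simpa [one_div, Real.zero_rpow (by positivity : r⁻¹ ≠ 0)] using this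
end

section
/- Key estimate of Lemma 3.1: let p, q ≥ 2, suppose μ(x) ≥ μ0 > 0 and h1(x), h2(x) ≥ h0 > 0 for all x ∈ V, and let F : V × ℝ² → ℝ be continuously differentiable in (s,t) with F(x,0,0) = 0 and satisfy: there are f1, f2 : V → [0,∞) bounded and g1 ∈ L^{p/(p−1)}(V), g2 ∈ L^{q/(q−1)}(V) with |F_s(x,s,t)| ≤ f1(x)(|s|^{p−1}+|t|^{q(p−1)/p}) + g1(x) and |F_t(x,s,t)| ≤ f2(x)(|s|^p+|t|^{q−1}) + g2(x) for all x, s, t. Then for all u, v : V → ℝ with finite norms ‖u‖ := ‖u‖_{W_{h1}^{1,p}} < ∞ and ‖v‖ := ‖v‖_{W_{h2}^{1,q}} < ∞, the sum ∑_{x∈V} μ(x)|F(x,u(x),v(x))| converges and is bounded above by (2‖f1‖_∞/(p·h0))‖u‖^p + ((p−1)‖f1‖_∞/(p·h0) + ‖f2‖_∞/(q·h0))‖v‖^q + h0^{−1/p}‖g1‖_{L^{p/(p−1)}(V)}‖u‖ + h0^{−1/q}‖g2‖_{L^{q/(q−1)}(V)}‖v‖. -/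
open scoped BigOperators
open Filter Topology

section AuxLemmas

open MeasureTheory

private lemma aux_intable (c d e : ℝ) (he : 0 ≤ e) :
    IntervalIntegrable (fun r : ℝ => c * r ^ e + d) volume 0 1 :=
  ((intervalIntegral.intervalIntegrable_rpow' (by linarith)).const_mul c).add
    intervalIntegrable_const

private lemma aux_integral (c d e : ℝ) (he : 0 ≤ e) :
    ∫ r in (0:ℝ)..1, (c * r ^ e + d) = c / (e + 1) + d := by
  rw [intervalIntegral.integral_add
      ((intervalIntegral.intervalIntegrable_rpow' (by linarith)).const_mul c)
      intervalIntegrable_const,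
    intervalIntegral.integral_const_mul, integral_rpow (Or.inl (by linarith)),
    intervalIntegral.integral_const]
  rw [Real.one_rpow, Real.zero_rpow (ne_of_gt (by linarith : (0:ℝ) < e + 1))]
  simp [smul_eq_mul]
  ring

private lemma ftc_bound {φ F' bound : ℝ → ℝ}
    (hderiv : ∀ r : ℝ, HasDerivAt φ (F' r) r)
    (hcont : Continuous F')
    (hb : ∀ r ∈ Set.Icc (0:ℝ) 1, |F' r| ≤ bound r)
    (hbi : IntervalIntegrable bound volume 0 1) :
    |φ 1 - φ 0| ≤ ∫ r in (0:ℝ)..1, bound r := by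
  have h1 : ∫ r in (0:ℝ)..1, F' r = φ 1 - φ 0 :=
    intervalIntegral.integral_eq_sub_of_hasDerivAt (fun r _ => hderiv r)
      (hcont.intervalIntegrable 0 1)
  rw [← h1]
  calc |∫ r in (0:ℝ)..1, F' r| ≤ ∫ r in (0:ℝ)..1, |F' r| :=
        intervalIntegral.abs_integral_le_integral_abs zero_le_one
    _ ≤ ∫ r in (0:ℝ)..1, bound r :=
        intervalIntegral.integral_mono_on zero_le_one (hcont.abs.intervalIntegrable 0 1) hbi hb

private lemma pointwise_bound {V : Type*} (p q : ℝ) (hp : 2 ≤ p) (hq : 2 ≤ q)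
    (F Fs Ft : V → ℝ → ℝ → ℝ) (hC1 : IsC1Pair F Fs Ft) (hF00 : ∀ x, F x 0 0 = 0)
    (f1 f2 g1 g2 : V → ℝ) (hf1 : ∀ x, 0 ≤ f1 x)
    (hFs : ∀ x s t, |Fs x s t| ≤ f1 x * (|s| ^ (p - 1) + |t| ^ (q * (p - 1) / p)) + g1 x)
    (hFt : ∀ x s t, |Ft x s t| ≤ f2 x * (|s| ^ p + |t| ^ (q - 1)) + g2 x)
    (x : V) (s t : ℝ) :
    |F x s t| ≤ 2 * f1 x / p * |s| ^ p + ((p - 1) * f1 x / p + f2 x / q) * |t| ^ q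
      + g1 x * |s| + g2 x * |t| := by
  have hp0 : (0:ℝ) < p := by linarith
  have hq0 : (0:ℝ) < q := by linarith
  have hp1 : (1:ℝ) < p := by linarith
  have hpne : p ≠ 0 := hp0.ne'
  have hqne : q ≠ 0 := hq0.ne'
  have hp1ne : p - 1 ≠ 0 := sub_ne_zero.mpr hp1.ne'
  set α := q * (p - 1) / p with hα
  -- first piece : |F x s t - F x 0 t|
  have h1 : |F x s t - F x 0 t| ≤
      f1 x * |s| ^ (p - 1) * |s| / p + (f1 x * |t| ^ α * |s| + g1 x * |s|) := by
    have hderiv : ∀ r : ℝ, HasDerivAt (fun r : ℝ => F x (r * s) t) (Fs x (r * s) t * s) r := by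
      intro r
      have h := ((hC1 x).1 (r * s) t).comp r (hasDerivAt_mul_const s)
      exact h
    have hcont : Continuous fun r : ℝ => Fs x (r * s) t * s := by
      have hc : Continuous fun r : ℝ => ((r * s, t) : ℝ × ℝ) :=
        (continuous_id.mul continuous_const).prodMk continuous_const
      exact (((hC1 x).2.2.1).comp hc).mul continuous_const
    have hb : ∀ r ∈ Set.Icc (0:ℝ) 1, |Fs x (r * s) t * s| ≤
        (f1 x * |s| ^ (p - 1) * |s|) * r ^ (p - 1) + (f1 x * |t| ^ α * |s| + g1 x * |s|) := by
      intro r hr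
      have habs : |r * s| ^ (p - 1) = r ^ (p - 1) * |s| ^ (p - 1) := by
        rw [abs_mul, abs_of_nonneg hr.1, Real.mul_rpow hr.1 (abs_nonneg s)]
      calc |Fs x (r * s) t * s| = |Fs x (r * s) t| * |s| := abs_mul _ _
        _ ≤ (f1 x * (|r * s| ^ (p - 1) + |t| ^ α) + g1 x) * |s| :=
            mul_le_mul_of_nonneg_right (hFs x _ t) (abs_nonneg s)
        _ = (f1 x * |s| ^ (p - 1) * |s|) * r ^ (p - 1)
            + (f1 x * |t| ^ α * |s| + g1 x * |s|) := by rw [habs]; ring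
    have hkey := ftc_bound hderiv hcont hb (aux_intable _ _ _ (by linarith))
    rw [aux_integral _ _ _ (by linarith)] at hkey
    have e1 : p - 1 + 1 = p := by ring
    simpa [e1] using hkey
  -- second piece : |F x 0 t|
  have h2 : |F x 0 t| ≤ f2 x * |t| ^ (q - 1) * |t| / q + g2 x * |t| := by
    have hderiv : ∀ r : ℝ, HasDerivAt (fun r : ℝ => F x 0 (r * t)) (Ft x 0 (r * t) * t) r := by
      intro r
      have h := ((hC1 x).2.1 0 (r * t)).comp r (hasDerivAt_mul_const t)
      exact h
    have hcont : Continuous fun r : ℝ => Ft x 0 (r * t) * t := by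
      have hc : Continuous fun r : ℝ => (((0:ℝ), r * t) : ℝ × ℝ) :=
        continuous_const.prodMk (continuous_id.mul continuous_const)
      exact (((hC1 x).2.2.2).comp hc).mul continuous_const
    have hb : ∀ r ∈ Set.Icc (0:ℝ) 1, |Ft x 0 (r * t) * t| ≤
        (f2 x * |t| ^ (q - 1) * |t|) * r ^ (q - 1) + g2 x * |t| := by
      intro r hr
      have habs : |r * t| ^ (q - 1) = r ^ (q - 1) * |t| ^ (q - 1) := by
        rw [abs_mul, abs_of_nonneg hr.1, Real.mul_rpow hr.1 (abs_nonneg t)]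
      have h0p : |(0:ℝ)| ^ p = 0 := by rw [abs_zero, Real.zero_rpow hpne]
      calc |Ft x 0 (r * t) * t| = |Ft x 0 (r * t)| * |t| := abs_mul _ _
        _ ≤ (f2 x * (|(0:ℝ)| ^ p + |r * t| ^ (q - 1)) + g2 x) * |t| :=
            mul_le_mul_of_nonneg_right (hFt x 0 _) (abs_nonneg t)
        _ = (f2 x * |t| ^ (q - 1) * |t|) * r ^ (q - 1) + g2 x * |t| := by
            rw [habs, h0p]; ring
    have hkey := ftc_bound hderiv hcont hb (aux_intable _ _ _ (by linarith))
    rw [aux_integral _ _ _ (by linarith)] at hkey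
    have e1 : q - 1 + 1 = q := by ring
    simpa [e1, hF00 x] using hkey
  -- rpow merges
  have hsp : |s| ^ (p - 1) * |s| = |s| ^ p := by
    nth_rewrite 2 [← Real.rpow_one |s|]
    rw [← Real.rpow_add_of_nonneg (abs_nonneg s) (by linarith) zero_le_one]
    congr 1; ring
  have hsq : |t| ^ (q - 1) * |t| = |t| ^ q := by
    nth_rewrite 2 [← Real.rpow_one |t|]
    rw [← Real.rpow_add_of_nonneg (abs_nonneg t) (by linarith) zero_le_one]
    congr 1; ring
  -- Young's inequality
  have hconj : Real.HolderConjugate p (p / (p - 1)) := by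
    refine Real.holderConjugate_iff.mpr ⟨hp1, ?_⟩
    rw [inv_div]
    field_simp
    ring
  have hq' : (|t| ^ α) ^ (p / (p - 1)) = |t| ^ q := by
    rw [← Real.rpow_mul (abs_nonneg t)]
    congr 1
    rw [hα]
    field_simp
  have hyoung := Real.young_inequality_of_nonneg (abs_nonneg s)
    (Real.rpow_nonneg (abs_nonneg t) α) hconj
  rw [hq'] at hyoung
  have hdiv : |t| ^ q / (p / (p - 1)) = (p - 1) / p * |t| ^ q := by
    field_simp
  rw [hdiv] at hyoung
  have hy2 : f1 x * (|s| * |t| ^ α) ≤ f1 x * (|s| ^ p / p + (p - 1) / p * |t| ^ q) :=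
    mul_le_mul_of_nonneg_left hyoung (hf1 x)
  have htri : |F x s t| ≤ |F x s t - F x 0 t| + |F x 0 t| := by
    have h := abs_add_le (F x s t - F x 0 t) (F x 0 t)
    simpa using h
  calc |F x s t| ≤ (f1 x * |s| ^ (p - 1) * |s| / p + (f1 x * |t| ^ α * |s| + g1 x * |s|))
        + (f2 x * |t| ^ (q - 1) * |t| / q + g2 x * |t|) := htri.trans (add_le_add h1 h2)
    _ = f1 x * |s| ^ p / p + f1 x * (|s| * |t| ^ α) + g1 x * |s|
        + f2 x * |t| ^ q / q + g2 x * |t| := by rw [← hsp, ← hsq]; ring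
    _ ≤ f1 x * |s| ^ p / p + f1 x * (|s| ^ p / p + (p - 1) / p * |t| ^ q) + g1 x * |s|
        + f2 x * |t| ^ q / q + g2 x * |t| := by linarith
    _ = 2 * f1 x / p * |s| ^ p + ((p - 1) * f1 x / p + f2 x / q) * |t| ^ q
        + g1 x * |s| + g2 x * |t| := by ring

private lemma hoelder_tsum {V : Type*} (G : WGraph V) {r p : ℝ} (hconj : Real.HolderConjugate r p)
    (g w : V → ℝ) (hg : ∀ x, 0 ≤ g x) (hw : ∀ x, 0 ≤ w x)
    (hgs : Summable fun x => G.μ x * g x ^ r) (hws : Summable fun x => G.μ x * w x ^ p) :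
    (Summable fun x => G.μ x * (g x * w x)) ∧
      ∑' x, G.μ x * (g x * w x) ≤
        (∑' x, G.μ x * g x ^ r) ^ (1/r) * (∑' x, G.μ x * w x ^ p) ^ (1/p) := by
  have hμ := G.mu_pos
  have e1 : ∀ x, ((G.μ x) ^ (1/r) * g x) ^ r = G.μ x * g x ^ r := by
    intro x
    rw [Real.mul_rpow (Real.rpow_nonneg (hμ x).le _) (hg x), ← Real.rpow_mul (hμ x).le,
      one_div_mul_cancel hconj.pos.ne', Real.rpow_one]
  have e2 : ∀ x, ((G.μ x) ^ (1/p) * w x) ^ p = G.μ x * w x ^ p := by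
    intro x
    rw [Real.mul_rpow (Real.rpow_nonneg (hμ x).le _) (hw x), ← Real.rpow_mul (hμ x).le,
      one_div_mul_cancel hconj.symm.pos.ne', Real.rpow_one]
  have e3 : ∀ x, ((G.μ x) ^ (1/r) * g x) * ((G.μ x) ^ (1/p) * w x) = G.μ x * (g x * w x) := by
    intro x
    rw [mul_mul_mul_comm, ← Real.rpow_add (hμ x),
      show 1/r + 1/p = 1 by rw [one_div, one_div]; exact hconj.inv_add_inv_eq_one, Real.rpow_one]
  have key := Real.summable_and_inner_le_Lp_mul_Lq_tsum_of_nonneg hconj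
    (f := fun x => (G.μ x) ^ (1/r) * g x) (g := fun x => (G.μ x) ^ (1/p) * w x)
    (fun x => mul_nonneg (Real.rpow_nonneg (hμ x).le _) (hg x))
    (fun x => mul_nonneg (Real.rpow_nonneg (hμ x).le _) (hw x))
    (hgs.congr fun x => (e1 x).symm) (hws.congr fun x => (e2 x).symm)
  constructor
  · exact key.1.congr fun x => e3 x
  · calc ∑' x, G.μ x * (g x * w x)
        = ∑' x, ((G.μ x) ^ (1/r) * g x) * ((G.μ x) ^ (1/p) * w x) :=
          tsum_congr fun x => (e3 x).symm
      _ ≤ _ := key.2.trans_eq (by rw [tsum_congr e1, tsum_congr e2])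

end AuxLemmas

/-- key estimate of Lemma 3.1: under (H1) and (F1) the sum
`∑_{x∈V} μ(x)|F(x,u(x),v(x))|` converges for `u ∈ W_{h1}^{1,p}`, `v ∈ W_{h2}^{1,q}`, and is
bounded by
`(2‖f1‖_∞/(p h0))‖u‖^p + ((p−1)‖f1‖_∞/(p h0) + ‖f2‖_∞/(q h0))‖v‖^q
  + h0^{−1/p}‖g1‖_{L^{p/(p−1)}}‖u‖ + h0^{−1/q}‖g2‖_{L^{q/(q−1)}}‖v‖`. -/
theorem primitive_sum_bound {V : Type*} (G : WGraph V) (p q : ℝ) (hp : 2 ≤ p) (hq : 2 ≤ q)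
    (μ0 h0 : ℝ) (hμ0 : 0 < μ0) (hh0 : 0 < h0) (hμ : ∀ x, μ0 ≤ G.μ x)
    (h1 h2 : V → ℝ) (hh1 : ∀ x, h0 ≤ h1 x) (hh2 : ∀ x, h0 ≤ h2 x)
    (F Fs Ft : V → ℝ → ℝ → ℝ) (hC1 : IsC1Pair F Fs Ft) (hF00 : ∀ x, F x 0 0 = 0)
    (f1 f2 g1 g2 : V → ℝ)
    (hf1 : ∀ x, 0 ≤ f1 x) (hf2 : ∀ x, 0 ≤ f2 x)
    (hf1b : BddAbove (Set.range f1)) (hf2b : BddAbove (Set.range f2))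
    (hg1 : ∀ x, 0 ≤ g1 x) (hg2 : ∀ x, 0 ≤ g2 x)
    (hg1L : G.MemLpV (p / (p - 1)) g1) (hg2L : G.MemLpV (q / (q - 1)) g2)
    (hFs : ∀ x s t, |Fs x s t| ≤ f1 x * (|s| ^ (p - 1) + |t| ^ (q * (p - 1) / p)) + g1 x)
    (hFt : ∀ x s t, |Ft x s t| ≤ f2 x * (|s| ^ p + |t| ^ (q - 1)) + g2 x)
    (u v : V → ℝ) (hu : G.SobSummable h1 p u) (hv : G.SobSummable h2 q v) :
    (Summable fun x => G.μ x * |F x (u x) (v x)|) ∧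
    ∑' x, G.μ x * |F x (u x) (v x)| ≤
      (2 * (⨆ x, f1 x) / (p * h0)) * G.sobSum h1 p u
        + ((p - 1) * (⨆ x, f1 x) / (p * h0) + (⨆ x, f2 x) / (q * h0)) * G.sobSum h2 q v
        + h0 ^ (-(1 / p)) * G.lpNorm (p / (p - 1)) g1 * G.sobNorm h1 p u
        + h0 ^ (-(1 / q)) * G.lpNorm (q / (q - 1)) g2 * G.sobNorm h2 q v := by
  have hp0 : (0:ℝ) < p := by linarith
  have hq0 : (0:ℝ) < q := by linarith
  have hp1 : (1:ℝ) < p := by linarith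
  have hq1 : (1:ℝ) < q := by linarith
  have hpne : p ≠ 0 := hp0.ne'
  have hqne : q ≠ 0 := hq0.ne'
  have hh0ne : h0 ≠ 0 := hh0.ne'
  have hp1ne : p - 1 ≠ 0 := sub_ne_zero.mpr hp1.ne'
  have hq1ne : q - 1 ≠ 0 := sub_ne_zero.mpr hq1.ne'
  have hμpos := G.mu_pos
  set C1 := ⨆ x, f1 x with hC1def
  set C2 := ⨆ x, f2 x with hC2def
  have hC1nn : 0 ≤ C1 := Real.iSup_nonneg hf1
  have hC2nn : 0 ≤ C2 := Real.iSup_nonneg hf2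
  have hle1 : ∀ x, f1 x ≤ C1 := fun x => le_ciSup hf1b x
  have hle2 : ∀ x, f2 x ≤ C2 := fun x => le_ciSup hf2b x
  have hu' : Summable (fun x => G.μ x * (G.grad u x ^ p + h1 x * |u x| ^ p)) := hu
  have hv' : Summable (fun x => G.μ x * (G.grad v x ^ q + h2 x * |v x| ^ q)) := hv
  have habsnnu : ∀ x, (0:ℝ) ≤ G.μ x * |u x| ^ p := fun x =>
    mul_nonneg (hμpos x).le (Real.rpow_nonneg (abs_nonneg _) _)
  have habsnnv : ∀ x, (0:ℝ) ≤ G.μ x * |v x| ^ q := fun x =>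
    mul_nonneg (hμpos x).le (Real.rpow_nonneg (abs_nonneg _) _)
  -- comparison of ∑ μ|u|^p with the Sobolev sum
  have hptu : ∀ x, G.μ x * |u x| ^ p ≤
      h0⁻¹ * (G.μ x * (G.grad u x ^ p + h1 x * |u x| ^ p)) := by
    intro x
    rw [← mul_le_mul_iff_right₀ hh0, mul_inv_cancel_left₀ hh0ne]
    have hgnn : 0 ≤ G.grad u x ^ p := Real.rpow_nonneg (Real.sqrt_nonneg _) _
    have hu0 : 0 ≤ |u x| ^ p := Real.rpow_nonneg (abs_nonneg _) _
    have hm := mul_le_mul_of_nonneg_right (hh1 x) hu0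
    calc h0 * (G.μ x * |u x| ^ p) = G.μ x * (h0 * |u x| ^ p) := by ring
      _ ≤ G.μ x * (h1 x * |u x| ^ p) := mul_le_mul_of_nonneg_left hm (hμpos x).le
      _ ≤ G.μ x * (G.grad u x ^ p + h1 x * |u x| ^ p) := by
          apply mul_le_mul_of_nonneg_left _ (hμpos x).le
          linarith
  have hptv : ∀ x, G.μ x * |v x| ^ q ≤
      h0⁻¹ * (G.μ x * (G.grad v x ^ q + h2 x * |v x| ^ q)) := by
    intro x
    rw [← mul_le_mul_iff_right₀ hh0, mul_inv_cancel_left₀ hh0ne]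
    have hgnn : 0 ≤ G.grad v x ^ q := Real.rpow_nonneg (Real.sqrt_nonneg _) _
    have hv0 : 0 ≤ |v x| ^ q := Real.rpow_nonneg (abs_nonneg _) _
    have hm := mul_le_mul_of_nonneg_right (hh2 x) hv0
    calc h0 * (G.μ x * |v x| ^ q) = G.μ x * (h0 * |v x| ^ q) := by ring
      _ ≤ G.μ x * (h2 x * |v x| ^ q) := mul_le_mul_of_nonneg_left hm (hμpos x).le
      _ ≤ G.μ x * (G.grad v x ^ q + h2 x * |v x| ^ q) := by
          apply mul_le_mul_of_nonneg_left _ (hμpos x).le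
          linarith
  have hSu1 : Summable fun x => G.μ x * |u x| ^ p :=
    Summable.of_nonneg_of_le habsnnu hptu (hu'.mul_left h0⁻¹)
  have hSv1 : Summable fun x => G.μ x * |v x| ^ q :=
    Summable.of_nonneg_of_le habsnnv hptv (hv'.mul_left h0⁻¹)
  have hTu : ∑' x, G.μ x * |u x| ^ p ≤ h0⁻¹ * G.sobSum h1 p u := by
    have h := Summable.tsum_le_tsum hptu hSu1 (hu'.mul_left h0⁻¹)
    rwa [tsum_mul_left] at h
  have hTv : ∑' x, G.μ x * |v x| ^ q ≤ h0⁻¹ * G.sobSum h2 q v := by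
    have h := Summable.tsum_le_tsum hptv hSv1 (hv'.mul_left h0⁻¹)
    rwa [tsum_mul_left] at h
  have hsob_nn : ∀ x, (0:ℝ) ≤ G.μ x * (G.grad u x ^ p + h1 x * |u x| ^ p) := fun x =>
    mul_nonneg (hμpos x).le (add_nonneg (Real.rpow_nonneg (Real.sqrt_nonneg _) _)
      (mul_nonneg (hh0.le.trans (hh1 x)) (Real.rpow_nonneg (abs_nonneg _) _)))
  have hsob_nn' : ∀ x, (0:ℝ) ≤ G.μ x * (G.grad v x ^ q + h2 x * |v x| ^ q) := fun x =>
    mul_nonneg (hμpos x).le (add_nonneg (Real.rpow_nonneg (Real.sqrt_nonneg _) _)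
      (mul_nonneg (hh0.le.trans (hh2 x)) (Real.rpow_nonneg (abs_nonneg _) _)))
  have hSu_nn : 0 ≤ G.sobSum h1 p u := tsum_nonneg hsob_nn
  have hSv_nn : 0 ≤ G.sobSum h2 q v := tsum_nonneg hsob_nn'
  -- conjugate exponents
  have hconjp : Real.HolderConjugate (p / (p - 1)) p := by
    refine Real.HolderConjugate.symm (Real.holderConjugate_iff.mpr ⟨hp1, ?_⟩)
    rw [inv_div]
    field_simp
    ring
  have hconjq : Real.HolderConjugate (q / (q - 1)) q := by
    refine Real.HolderConjugate.symm (Real.holderConjugate_iff.mpr ⟨hq1, ?_⟩)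
    rw [inv_div]
    field_simp
    ring
  -- Hölder for the g-terms
  have hg1L' : Summable fun x => G.μ x * g1 x ^ (p / (p - 1)) :=
    hg1L.congr fun x => by rw [abs_of_nonneg (hg1 x)]
  have hg2L' : Summable fun x => G.μ x * g2 x ^ (q / (q - 1)) :=
    hg2L.congr fun x => by rw [abs_of_nonneg (hg2 x)]
  have hH1 := hoelder_tsum G hconjp g1 (fun x => |u x|) hg1 (fun x => abs_nonneg _) hg1L' hSu1
  have hH2 := hoelder_tsum G hconjq g2 (fun x => |v x|) hg2 (fun x => abs_nonneg _) hg2L' hSv1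
  have hL1eq : (∑' x, G.μ x * g1 x ^ (p / (p - 1))) ^ (1 / (p / (p - 1)))
      = G.lpNorm (p / (p - 1)) g1 := by
    show _ = (∑' x, G.μ x * |g1 x| ^ (p / (p - 1))) ^ (1 / (p / (p - 1)))
    congr 1
    exact tsum_congr fun x => by rw [abs_of_nonneg (hg1 x)]
  have hL2eq : (∑' x, G.μ x * g2 x ^ (q / (q - 1))) ^ (1 / (q / (q - 1)))
      = G.lpNorm (q / (q - 1)) g2 := by
    show _ = (∑' x, G.μ x * |g2 x| ^ (q / (q - 1))) ^ (1 / (q / (q - 1)))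
    congr 1
    exact tsum_congr fun x => by rw [abs_of_nonneg (hg2 x)]
  have hL1nn : 0 ≤ G.lpNorm (p / (p - 1)) g1 := Real.rpow_nonneg
    (tsum_nonneg fun x => mul_nonneg (hμpos x).le (Real.rpow_nonneg (abs_nonneg _) _)) _
  have hL2nn : 0 ≤ G.lpNorm (q / (q - 1)) g2 := Real.rpow_nonneg
    (tsum_nonneg fun x => mul_nonneg (hμpos x).le (Real.rpow_nonneg (abs_nonneg _) _)) _
  have hNu : (∑' x, G.μ x * |u x| ^ p) ^ (1 / p)
      ≤ h0 ^ (-(1 / p)) * G.sobNorm h1 p u := by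
    have h' : (∑' x, G.μ x * |u x| ^ p) ^ (1 / p) ≤ (h0⁻¹ * G.sobSum h1 p u) ^ (1 / p) :=
      Real.rpow_le_rpow (tsum_nonneg habsnnu) hTu (by positivity)
    rwa [Real.mul_rpow (inv_nonneg.mpr hh0.le) hSu_nn, Real.inv_rpow hh0.le,
      ← Real.rpow_neg hh0.le] at h'
  have hNv : (∑' x, G.μ x * |v x| ^ q) ^ (1 / q)
      ≤ h0 ^ (-(1 / q)) * G.sobNorm h2 q v := by
    have h' : (∑' x, G.μ x * |v x| ^ q) ^ (1 / q) ≤ (h0⁻¹ * G.sobSum h2 q v) ^ (1 / q) :=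
      Real.rpow_le_rpow (tsum_nonneg habsnnv) hTv (by positivity)
    rwa [Real.mul_rpow (inv_nonneg.mpr hh0.le) hSv_nn, Real.inv_rpow hh0.le,
      ← Real.rpow_neg hh0.le] at h'
  -- the four majorant pieces
  have hB1le : ∀ x, G.μ x * (2 * f1 x / p * |u x| ^ p)
      ≤ 2 * C1 / p * (G.μ x * |u x| ^ p) := by
    intro x
    calc G.μ x * (2 * f1 x / p * |u x| ^ p)
        = 2 * f1 x / p * (G.μ x * |u x| ^ p) := by ring
      _ ≤ 2 * C1 / p * (G.μ x * |u x| ^ p) := by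
          apply mul_le_mul_of_nonneg_right _ (habsnnu x)
          gcongr
          exact hle1 x
  have hB2le : ∀ x, G.μ x * (((p - 1) * f1 x / p + f2 x / q) * |v x| ^ q)
      ≤ ((p - 1) * C1 / p + C2 / q) * (G.μ x * |v x| ^ q) := by
    intro x
    calc G.μ x * (((p - 1) * f1 x / p + f2 x / q) * |v x| ^ q)
        = ((p - 1) * f1 x / p + f2 x / q) * (G.μ x * |v x| ^ q) := by ring
      _ ≤ ((p - 1) * C1 / p + C2 / q) * (G.μ x * |v x| ^ q) := by
          apply mul_le_mul_of_nonneg_right _ (habsnnv x)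
          gcongr <;> first | exact hle1 x | exact hle2 x | linarith
  have hB1nn : ∀ x, (0:ℝ) ≤ G.μ x * (2 * f1 x / p * |u x| ^ p) := fun x =>
    mul_nonneg (hμpos x).le (mul_nonneg (div_nonneg (by linarith [hf1 x]) hp0.le)
      (Real.rpow_nonneg (abs_nonneg _) _))
  have hB2nn : ∀ x, (0:ℝ) ≤ G.μ x * (((p - 1) * f1 x / p + f2 x / q) * |v x| ^ q) := fun x =>
    mul_nonneg (hμpos x).le (mul_nonneg
      (add_nonneg (div_nonneg (mul_nonneg (by linarith) (hf1 x)) hp0.le)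
        (div_nonneg (hf2 x) hq0.le))
      (Real.rpow_nonneg (abs_nonneg _) _))
  have hB1s : Summable fun x => G.μ x * (2 * f1 x / p * |u x| ^ p) :=
    Summable.of_nonneg_of_le hB1nn hB1le (hSu1.mul_left _)
  have hB2s : Summable fun x => G.μ x * (((p - 1) * f1 x / p + f2 x / q) * |v x| ^ q) :=
    Summable.of_nonneg_of_le hB2nn hB2le (hSv1.mul_left _)
  have hB3s : Summable fun x => G.μ x * (g1 x * |u x|) := hH1.1
  have hB4s : Summable fun x => G.μ x * (g2 x * |v x|) := hH2.1
  -- bounds on the four partial sums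
  have hT1 : ∑' x, G.μ x * (2 * f1 x / p * |u x| ^ p)
      ≤ 2 * C1 / (p * h0) * G.sobSum h1 p u := by
    have h := Summable.tsum_le_tsum hB1le hB1s (hSu1.mul_left _)
    rw [tsum_mul_left] at h
    calc ∑' x, G.μ x * (2 * f1 x / p * |u x| ^ p)
        ≤ 2 * C1 / p * ∑' x, G.μ x * |u x| ^ p := h
      _ ≤ 2 * C1 / p * (h0⁻¹ * G.sobSum h1 p u) :=
          mul_le_mul_of_nonneg_left hTu (by positivity)
      _ = 2 * C1 / (p * h0) * G.sobSum h1 p u := by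
          field_simp <;> ring
  have hT2 : ∑' x, G.μ x * (((p - 1) * f1 x / p + f2 x / q) * |v x| ^ q)
      ≤ ((p - 1) * C1 / (p * h0) + C2 / (q * h0)) * G.sobSum h2 q v := by
    have h := Summable.tsum_le_tsum hB2le hB2s (hSv1.mul_left _)
    rw [tsum_mul_left] at h
    have hKnn : (0:ℝ) ≤ (p - 1) * C1 / p + C2 / q :=
      add_nonneg (div_nonneg (mul_nonneg (by linarith) hC1nn) hp0.le)
        (div_nonneg hC2nn hq0.le)
    calc ∑' x, G.μ x * (((p - 1) * f1 x / p + f2 x / q) * |v x| ^ q)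
        ≤ ((p - 1) * C1 / p + C2 / q) * ∑' x, G.μ x * |v x| ^ q := h
      _ ≤ ((p - 1) * C1 / p + C2 / q) * (h0⁻¹ * G.sobSum h2 q v) :=
          mul_le_mul_of_nonneg_left hTv hKnn
      _ = ((p - 1) * C1 / (p * h0) + C2 / (q * h0)) * G.sobSum h2 q v := by
          field_simp <;> ring
  have hT3 : ∑' x, G.μ x * (g1 x * |u x|)
      ≤ h0 ^ (-(1 / p)) * G.lpNorm (p / (p - 1)) g1 * G.sobNorm h1 p u := by
    calc ∑' x, G.μ x * (g1 x * |u x|)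
        ≤ (∑' x, G.μ x * g1 x ^ (p / (p - 1))) ^ (1 / (p / (p - 1)))
          * (∑' x, G.μ x * |u x| ^ p) ^ (1 / p) := hH1.2
      _ = G.lpNorm (p / (p - 1)) g1 * (∑' x, G.μ x * |u x| ^ p) ^ (1 / p) := by rw [hL1eq]
      _ ≤ G.lpNorm (p / (p - 1)) g1 * (h0 ^ (-(1 / p)) * G.sobNorm h1 p u) :=
          mul_le_mul_of_nonneg_left hNu hL1nn
      _ = h0 ^ (-(1 / p)) * G.lpNorm (p / (p - 1)) g1 * G.sobNorm h1 p u := by ring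
  have hT4 : ∑' x, G.μ x * (g2 x * |v x|)
      ≤ h0 ^ (-(1 / q)) * G.lpNorm (q / (q - 1)) g2 * G.sobNorm h2 q v := by
    calc ∑' x, G.μ x * (g2 x * |v x|)
        ≤ (∑' x, G.μ x * g2 x ^ (q / (q - 1))) ^ (1 / (q / (q - 1)))
          * (∑' x, G.μ x * |v x| ^ q) ^ (1 / q) := hH2.2
      _ = G.lpNorm (q / (q - 1)) g2 * (∑' x, G.μ x * |v x| ^ q) ^ (1 / q) := by rw [hL2eq]
      _ ≤ G.lpNorm (q / (q - 1)) g2 * (h0 ^ (-(1 / q)) * G.sobNorm h2 q v) :=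
          mul_le_mul_of_nonneg_left hNv hL2nn
      _ = h0 ^ (-(1 / q)) * G.lpNorm (q / (q - 1)) g2 * G.sobNorm h2 q v := by ring
  -- pointwise majorization
  have hpt : ∀ x, G.μ x * |F x (u x) (v x)|
      ≤ G.μ x * (2 * f1 x / p * |u x| ^ p)
        + G.μ x * (((p - 1) * f1 x / p + f2 x / q) * |v x| ^ q)
        + G.μ x * (g1 x * |u x|) + G.μ x * (g2 x * |v x|) := by
    intro x
    have h := pointwise_bound p q hp hq F Fs Ft hC1 hF00 f1 f2 g1 g2 hf1 hFs hFt x (u x) (v x)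
    calc G.μ x * |F x (u x) (v x)|
        ≤ G.μ x * (2 * f1 x / p * |u x| ^ p
            + ((p - 1) * f1 x / p + f2 x / q) * |v x| ^ q
            + g1 x * |u x| + g2 x * |v x|) := mul_le_mul_of_nonneg_left h (hμpos x).le
      _ = _ := by ring
  have hBsum : Summable fun x =>
      G.μ x * (2 * f1 x / p * |u x| ^ p)
        + G.μ x * (((p - 1) * f1 x / p + f2 x / q) * |v x| ^ q)
        + G.μ x * (g1 x * |u x|) + G.μ x * (g2 x * |v x|) :=
    ((hB1s.add hB2s).add hB3s).add hB4s
  have hsum : Summable fun x => G.μ x * |F x (u x) (v x)| :=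
    Summable.of_nonneg_of_le (fun x => mul_nonneg (hμpos x).le (abs_nonneg _)) hpt hBsum
  refine ⟨hsum, ?_⟩
  calc ∑' x, G.μ x * |F x (u x) (v x)|
      ≤ ∑' x, (G.μ x * (2 * f1 x / p * |u x| ^ p)
          + G.μ x * (((p - 1) * f1 x / p + f2 x / q) * |v x| ^ q)
          + G.μ x * (g1 x * |u x|) + G.μ x * (g2 x * |v x|)) :=
        Summable.tsum_le_tsum hpt hsum hBsum
    _ = (∑' x, G.μ x * (2 * f1 x / p * |u x| ^ p))
        + (∑' x, G.μ x * (((p - 1) * f1 x / p + f2 x / q) * |v x| ^ q))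
        + (∑' x, G.μ x * (g1 x * |u x|)) + (∑' x, G.μ x * (g2 x * |v x|)) := by
        rw [Summable.tsum_add ((hB1s.add hB2s).add hB3s) hB4s, Summable.tsum_add (hB1s.add hB2s) hB3s,
          Summable.tsum_add hB1s hB2s]
    _ ≤ 2 * C1 / (p * h0) * G.sobSum h1 p u
        + ((p - 1) * C1 / (p * h0) + C2 / (q * h0)) * G.sobSum h2 q v
        + h0 ^ (-(1 / p)) * G.lpNorm (p / (p - 1)) g1 * G.sobNorm h1 p u
        + h0 ^ (-(1 / q)) * G.lpNorm (q / (q - 1)) g2 * G.sobNorm h2 q v :=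
        add_le_add (add_le_add (add_le_add hT1 hT2) hT3) hT4
end

section
/- Necessary condition for semi-trivial solutions (from Theorem 1.1): let p ≥ 2, λ1 > 0, suppose μ(x) ≥ μ0 > 0 and h1(x) ≥ h0 > 0 for all x ∈ V, let e1 ∈ L^{p/(p−1)}(V), and let F : V × ℝ² → ℝ be continuously differentiable in (s,t) with |F_s(x,s,0)| ≤ f1(x)|s|^{p−1} + g1(x) for all x, s, where f1 : V → [0,∞) is bounded with ‖f1‖_∞ < h0 and g1 ∈ L^{p/(p−1)}(V), g1 ≥ 0. Suppose u : V → ℝ satisfies ∑_{x∈V} μ(x)(|∇u|^p(x)+h1(x)|u(x)|^p) < ∞ and the energy identity ∑_{x∈V} μ(x)(|∇u|^p(x) + h1(x)|u(x)|^p) = ∑_{x∈V} μ(x)(F_s(x,u(x),0)·u(x) + λ1 e1(x)·u(x)). Then sup_{x∈V}|u(x)| ≤ μ0^{−1/p}·((λ1‖e1‖_{L^{p/(p−1)}(V)} + ‖g1‖_{L^{p/(p−1)}(V)})/(h0 − ‖f1‖_∞))^{1/(p−1)}. -/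
open scoped BigOperators
open Filter Topology

lemma holder_tsum_aux {ι : Type*} {p q : ℝ} (hpq : p.HolderConjugate q)
    (m v w : ι → ℝ) (hm : ∀ i, 0 ≤ m i) (hv : ∀ i, 0 ≤ v i) (hw : ∀ i, 0 ≤ w i)
    (hvs : Summable fun i => m i * v i ^ p) (hws : Summable fun i => m i * w i ^ q) :
    (Summable fun i => m i * (v i * w i)) ∧
      ∑' i, m i * (v i * w i)
        ≤ (∑' i, m i * v i ^ p) ^ (1 / p) * (∑' i, m i * w i ^ q) ^ (1 / q) := by
  have hfn : ∀ i, 0 ≤ m i ^ (1 / p) * v i :=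
    fun i => mul_nonneg (Real.rpow_nonneg (hm i) _) (hv i)
  have hgn : ∀ i, 0 ≤ m i ^ (1 / q) * w i :=
    fun i => mul_nonneg (Real.rpow_nonneg (hm i) _) (hw i)
  have hfp : ∀ i, (m i ^ (1 / p) * v i) ^ p = m i * v i ^ p := by
    intro i
    rw [Real.mul_rpow (Real.rpow_nonneg (hm i) _) (hv i), ← Real.rpow_mul (hm i),
      one_div, inv_mul_cancel₀ hpq.ne_zero, Real.rpow_one]
  have hgq : ∀ i, (m i ^ (1 / q) * w i) ^ q = m i * w i ^ q := by
    intro i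
    rw [Real.mul_rpow (Real.rpow_nonneg (hm i) _) (hw i), ← Real.rpow_mul (hm i),
      one_div, inv_mul_cancel₀ hpq.symm.ne_zero, Real.rpow_one]
  have hfg : ∀ i, (m i ^ (1 / p) * v i) * (m i ^ (1 / q) * w i) = m i * (v i * w i) := by
    intro i
    have hmm : m i ^ (1 / p) * m i ^ (1 / q) = m i := by
      rw [← Real.rpow_add' (hm i) (by
        rw [one_div, one_div, hpq.inv_add_inv_eq_one]; norm_num),
        one_div, one_div, hpq.inv_add_inv_eq_one, Real.rpow_one]
    calc (m i ^ (1 / p) * v i) * (m i ^ (1 / q) * w i)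
        = (m i ^ (1 / p) * m i ^ (1 / q)) * (v i * w i) := by ring
      _ = m i * (v i * w i) := by rw [hmm]
  have h := Real.summable_and_inner_le_Lp_mul_Lq_tsum_of_nonneg hpq hfn hgn
    (hvs.congr fun i => (hfp i).symm) (hws.congr fun i => (hgq i).symm)
  refine ⟨h.1.congr fun i => hfg i, ?_⟩
  have h2 := h.2
  simp only [hfg, hfp, hgq] at h2
  exact h2

/-- necessary condition for semi-trivial solutions (from Theorem 1.1):
if `u ∈ W_{h1}^{1,p}(V)` satisfies the energy identity
`∑ μ(|∇u|^p + h1|u|^p) = ∑ μ(F_s(x,u,0)u + λ1 e1 u)`, then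
`sup_{x∈V}|u(x)| ≤ μ0^{−1/p}·((λ1‖e1‖ + ‖g1‖)/(h0 − ‖f1‖_∞))^{1/(p−1)}`. -/
theorem semitrivial_bound {V : Type*} (G : WGraph V)
    (μ0 h0 : ℝ) (hμ0 : 0 < μ0) (hh0 : 0 < h0) (hμ : ∀ x, μ0 ≤ G.μ x)
    (p : ℝ) (hp : 2 ≤ p) (lam1 : ℝ) (hlam1 : 0 < lam1)
    (h1 : V → ℝ) (hh1 : ∀ x, h0 ≤ h1 x)
    (e1 : V → ℝ) (he1L : G.MemLpV (p / (p - 1)) e1)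
    (F Fs Ft : V → ℝ → ℝ → ℝ) (hC1 : IsC1Pair F Fs Ft)
    (f1 g1 : V → ℝ) (hf1 : ∀ x, 0 ≤ f1 x) (hf1b : BddAbove (Set.range f1))
    (hf1small : (⨆ x, f1 x) < h0)
    (hg1 : ∀ x, 0 ≤ g1 x) (hg1L : G.MemLpV (p / (p - 1)) g1)
    (hFs : ∀ x s, |Fs x s 0| ≤ f1 x * |s| ^ (p - 1) + g1 x)
    (u : V → ℝ) (hu : G.SobSummable h1 p u)
    (hRHS : Summable fun x => G.μ x * (Fs x (u x) 0 * u x + lam1 * e1 x * u x))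
    (hEnergy : G.sobSum h1 p u
      = ∑' x, G.μ x * (Fs x (u x) 0 * u x + lam1 * e1 x * u x)) :
    ∀ x, |u x| ≤ μ0 ^ (-(1 / p)) *
      ((lam1 * G.lpNorm (p / (p - 1)) e1 + G.lpNorm (p / (p - 1)) g1)
        / (h0 - ⨆ x, f1 x)) ^ (1 / (p - 1)) := by
  intro x₀
  have hp1 : (1 : ℝ) < p := by linarith
  have hp0 : p ≠ 0 := by linarith
  set q : ℝ := p / (p - 1) with hqdef
  have hpq : p.HolderConjugate q := Real.HolderConjugate.conjExponent hp1
  set M : ℝ := ⨆ x, f1 x with hMdef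
  have hf1M : ∀ x, f1 x ≤ M := fun x => le_ciSup hf1b x
  have hM0 : 0 ≤ M := le_trans (hf1 x₀) (hf1M x₀)
  have hhM : 0 < h0 - M := sub_pos.2 hf1small
  -- basic nonnegativity
  have hup : ∀ x, (0 : ℝ) ≤ |u x| ^ p := fun x => Real.rpow_nonneg (abs_nonneg _) _
  have hgradp : ∀ x, (0 : ℝ) ≤ G.grad u x ^ p :=
    fun x => Real.rpow_nonneg (Real.sqrt_nonneg _) _
  -- summability of μ |u|^p
  have hSu : Summable fun x => G.μ x * |u x| ^ p := by
    have hs : Summable fun x => G.μ x * (h0 * |u x| ^ p) := by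
      refine Summable.of_nonneg_of_le (fun x => ?_) (fun x => ?_) hu
      · exact mul_nonneg (G.mu_pos x).le (mul_nonneg hh0.le (hup x))
      · refine mul_le_mul_of_nonneg_left ?_ (G.mu_pos x).le
        have : h0 * |u x| ^ p ≤ h1 x * |u x| ^ p :=
          mul_le_mul_of_nonneg_right (hh1 x) (hup x)
        nlinarith [hgradp x]
    refine ((hs.mul_left (1 / h0)).congr fun x => ?_)
    field_simp
  set S : ℝ := ∑' x, G.μ x * |u x| ^ p with hSdef
  have hS0 : 0 ≤ S := tsum_nonneg fun x => mul_nonneg (G.mu_pos x).le (hup x)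
  -- Step A : h0 * S ≤ sobSum
  have hA : h0 * S ≤ G.sobSum h1 p u := by
    rw [hSdef, ← tsum_mul_left]
    refine Summable.tsum_le_tsum (fun x => ?_) (hSu.mul_left h0) hu
    have h1' : h0 * |u x| ^ p ≤ h1 x * |u x| ^ p :=
      mul_le_mul_of_nonneg_right (hh1 x) (hup x)
    have := (G.mu_pos x).le
    nlinarith [hgradp x]
  -- |u|^p = |u|^(p-1) * |u|
  have hpow : ∀ x, |u x| ^ p = |u x| ^ (p - 1) * |u x| := by
    intro x
    have : |u x| ^ ((p - 1) + 1) = |u x| ^ (p - 1) * |u x| ^ (1 : ℝ) :=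
      Real.rpow_add' (abs_nonneg _) (by linarith)
    simpa [Real.rpow_one] using this
  -- Hölder for g1 and e1
  have hg1abs : (Summable fun x => G.μ x * g1 x ^ q) ∧
      (∑' x, G.μ x * g1 x ^ q) = ∑' x, G.μ x * |g1 x| ^ q := by
    constructor
    · exact hg1L.congr fun x => by rw [abs_of_nonneg (hg1 x)]
    · exact tsum_congr fun x => by rw [abs_of_nonneg (hg1 x)]
  have he1abs : Summable fun x => G.μ x * |e1 x| ^ q := he1L
  have hHg := holder_tsum_aux hpq (fun x => G.μ x) (fun x => |u x|) g1
    (fun x => (G.mu_pos x).le) (fun x => abs_nonneg _) hg1 hSu hg1abs.1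
  have hHe := holder_tsum_aux hpq (fun x => G.μ x) (fun x => |u x|) (fun x => |e1 x|)
    (fun x => (G.mu_pos x).le) (fun x => abs_nonneg _) (fun x => abs_nonneg _) hSu he1abs
  set Ng : ℝ := G.lpNorm q g1 with hNgdef
  set Ne : ℝ := G.lpNorm q e1 with hNedef
  have hNg0 : 0 ≤ Ng := Real.rpow_nonneg
    (tsum_nonneg fun x => mul_nonneg (G.mu_pos x).le (Real.rpow_nonneg (abs_nonneg _) _)) _
  have hNe0 : 0 ≤ Ne := Real.rpow_nonneg
    (tsum_nonneg fun x => mul_nonneg (G.mu_pos x).le (Real.rpow_nonneg (abs_nonneg _) _)) _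
  have hNe_eq : Ne = (∑' x, G.μ x * |e1 x| ^ q) ^ (1 / q) := rfl
  have hNg_eq : Ng = (∑' x, G.μ x * g1 x ^ q) ^ (1 / q) := by
    rw [hNgdef, WGraph.lpNorm, hg1abs.2]
  have hHg2 : ∑' x, G.μ x * (|u x| * g1 x) ≤ S ^ (1 / p) * Ng := by
    rw [hNg_eq]; simpa using hHg.2
  have hHe2 : ∑' x, G.μ x * (|u x| * |e1 x|) ≤ S ^ (1 / p) * Ne := by
    rw [hNe_eq]; simpa using hHe.2
  -- summability of the pointwise bound
  have hSf1 : Summable fun x => G.μ x * (f1 x * |u x| ^ p) := by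
    refine Summable.of_nonneg_of_le (fun x => ?_) (fun x => ?_) (hSu.mul_left M)
    · exact mul_nonneg (G.mu_pos x).le (mul_nonneg (hf1 x) (hup x))
    · calc G.μ x * (f1 x * |u x| ^ p) ≤ G.μ x * (M * |u x| ^ p) := by
            refine mul_le_mul_of_nonneg_left
              (mul_le_mul_of_nonneg_right (hf1M x) (hup x)) (G.mu_pos x).le
        _ = M * (G.μ x * |u x| ^ p) := by ring
  have hTf1 : ∑' x, G.μ x * (f1 x * |u x| ^ p) ≤ M * S := by
    rw [hSdef, ← tsum_mul_left]
    refine Summable.tsum_le_tsum (fun x => ?_) hSf1 (hSu.mul_left M)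
    calc G.μ x * (f1 x * |u x| ^ p) ≤ G.μ x * (M * |u x| ^ p) :=
          mul_le_mul_of_nonneg_left
            (mul_le_mul_of_nonneg_right (hf1M x) (hup x)) (G.mu_pos x).le
      _ = M * (G.μ x * |u x| ^ p) := by ring
  -- Step C : bound the RHS tsum
  have hbound : ∀ x, G.μ x * (Fs x (u x) 0 * u x + lam1 * e1 x * u x)
      ≤ G.μ x * (f1 x * |u x| ^ p) + (G.μ x * (|u x| * g1 x)
        + lam1 * (G.μ x * (|u x| * |e1 x|))) := by
    intro x
    have h1' : Fs x (u x) 0 * u x ≤ f1 x * |u x| ^ p + g1 x * |u x| := by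
      calc Fs x (u x) 0 * u x ≤ |Fs x (u x) 0 * u x| := le_abs_self _
        _ = |Fs x (u x) 0| * |u x| := abs_mul _ _
        _ ≤ (f1 x * |u x| ^ (p - 1) + g1 x) * |u x| :=
            mul_le_mul_of_nonneg_right (hFs x (u x)) (abs_nonneg _)
        _ = f1 x * (|u x| ^ (p - 1) * |u x|) + g1 x * |u x| := by ring
        _ = f1 x * |u x| ^ p + g1 x * |u x| := by rw [← hpow x]
    have h2' : lam1 * e1 x * u x ≤ lam1 * (|u x| * |e1 x|) := by
      calc lam1 * e1 x * u x ≤ |lam1 * e1 x * u x| := le_abs_self _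
        _ = lam1 * (|u x| * |e1 x|) := by
            rw [abs_mul, abs_mul, abs_of_pos hlam1]; ring
    have hμx := (G.mu_pos x).le
    calc G.μ x * (Fs x (u x) 0 * u x + lam1 * e1 x * u x)
        ≤ G.μ x * ((f1 x * |u x| ^ p + g1 x * |u x|) + lam1 * (|u x| * |e1 x|)) := by
          refine mul_le_mul_of_nonneg_left (by linarith) hμx
      _ = G.μ x * (f1 x * |u x| ^ p) + (G.μ x * (|u x| * g1 x)
          + lam1 * (G.μ x * (|u x| * |e1 x|))) := by ring
  have hSbound : Summable fun x => G.μ x * (f1 x * |u x| ^ p)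
      + (G.μ x * (|u x| * g1 x) + lam1 * (G.μ x * (|u x| * |e1 x|))) :=
    hSf1.add (hHg.1.add (hHe.1.mul_left lam1))
  have hC : ∑' x, G.μ x * (Fs x (u x) 0 * u x + lam1 * e1 x * u x)
      ≤ M * S + (S ^ (1 / p) * Ng + lam1 * (S ^ (1 / p) * Ne)) := by
    calc ∑' x, G.μ x * (Fs x (u x) 0 * u x + lam1 * e1 x * u x)
        ≤ ∑' x, (G.μ x * (f1 x * |u x| ^ p)
            + (G.μ x * (|u x| * g1 x) + lam1 * (G.μ x * (|u x| * |e1 x|)))) :=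
          Summable.tsum_le_tsum hbound hRHS hSbound
      _ = (∑' x, G.μ x * (f1 x * |u x| ^ p)) + ((∑' x, G.μ x * (|u x| * g1 x))
            + lam1 * ∑' x, G.μ x * (|u x| * |e1 x|)) := by
          rw [Summable.tsum_add hSf1 (hHg.1.add (hHe.1.mul_left lam1)),
            Summable.tsum_add hHg.1 (hHe.1.mul_left lam1), tsum_mul_left]
      _ ≤ M * S + (S ^ (1 / p) * Ng + lam1 * (S ^ (1 / p) * Ne)) := by
          gcongr <;> first
            | exact hTf1
            | exact hHg2
            | exact hHe2
  -- main inequality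
  set C : ℝ := lam1 * Ne + Ng with hCdef
  have hC0 : 0 ≤ C := by positivity
  set T : ℝ := S ^ (1 / p) with hTdef
  have hT0 : 0 ≤ T := Real.rpow_nonneg hS0 _
  have hTp : T ^ p = S := by
    rw [hTdef, ← Real.rpow_mul hS0, one_div, inv_mul_cancel₀ hp0, Real.rpow_one]
  have hkey : (h0 - M) * S ≤ C * T := by
    have hstep : G.sobSum h1 p u
        ≤ M * S + (S ^ (1 / p) * Ng + lam1 * (S ^ (1 / p) * Ne)) := by
      rw [hEnergy]; exact hC
    have hAC := hA.trans hstep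
    rw [hCdef, hTdef]; nlinarith
  -- conclude T ≤ (C/(h0-M))^(1/(p-1))
  have hTB : T ≤ (C / (h0 - M)) ^ (1 / (p - 1)) := by
    rcases eq_or_lt_of_le hT0 with hT | hT
    · rw [← hT]
      exact Real.rpow_nonneg (div_nonneg hC0 hhM.le) _
    · have hTp1 : T ^ p = T ^ (p - 1) * T := by
        have : T ^ ((p - 1) + 1) = T ^ (p - 1) * T ^ (1 : ℝ) :=
          Real.rpow_add' hT0 (by linarith)
        simpa [Real.rpow_one] using this
      have h2 : (h0 - M) * T ^ (p - 1) ≤ C := by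
        have h3 : ((h0 - M) * T ^ (p - 1)) * T ≤ C * T := by
          calc ((h0 - M) * T ^ (p - 1)) * T = (h0 - M) * T ^ p := by rw [hTp1]; ring
            _ = (h0 - M) * S := by rw [hTp]
            _ ≤ C * T := hkey
        exact le_of_mul_le_mul_right h3 hT
      have h4 : T ^ (p - 1) ≤ C / (h0 - M) := (le_div_iff₀' hhM).mpr h2
      calc T = (T ^ (p - 1)) ^ (1 / (p - 1)) := by
            rw [← Real.rpow_mul hT0, mul_one_div, div_self (by linarith : p - 1 ≠ 0),
              Real.rpow_one]
        _ ≤ (C / (h0 - M)) ^ (1 / (p - 1)) :=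
            Real.rpow_le_rpow (Real.rpow_nonneg hT0 _) h4
              (by have hp10 : (0:ℝ) < p - 1 := by linarith
                  positivity)
  -- pointwise bound
  have hpt : G.μ x₀ * |u x₀| ^ p ≤ S := by
    refine Summable.le_tsum hSu x₀ fun y _ => mul_nonneg (G.mu_pos y).le (hup y)
  have hptm : μ0 * |u x₀| ^ p ≤ S :=
    le_trans (mul_le_mul_of_nonneg_right (hμ x₀) (hup x₀)) hpt
  have hup2 : |u x₀| ^ p ≤ S / μ0 := (le_div_iff₀' hμ0).mpr hptm
  have hfinal : |u x₀| ≤ μ0 ^ (-(1 / p)) * T := by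
    calc |u x₀| = (|u x₀| ^ p) ^ (1 / p) := by
          rw [← Real.rpow_mul (abs_nonneg _), mul_one_div, div_self hp0, Real.rpow_one]
      _ ≤ (S / μ0) ^ (1 / p) :=
          Real.rpow_le_rpow (hup x₀) hup2 (by positivity)
      _ = S ^ (1 / p) / μ0 ^ (1 / p) := Real.div_rpow hS0 hμ0.le _
      _ = μ0 ^ (-(1 / p)) * T := by
          rw [Real.rpow_neg hμ0.le, hTdef]; ring
  refine hfinal.trans ?_
  have : (0 : ℝ) ≤ μ0 ^ (-(1 / p)) := Real.rpow_nonneg hμ0.le _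
  exact mul_le_mul_of_nonneg_left hTB this
end
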